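/- arXiv:2204.06300 — 3 statements merged into one kernel-verified Lean document; each statement's English description precedes it below -/
import Mathlib

section
/- Let A be a bounded self-adjoint operator on a separable infinite-dimensional Hilbert space H with inf_{‖x‖=1} ⟨Ax, x⟩ > 0, whose eigenvectors span a dense subspace of H (i.e. σ(A) = σ_pp(A) ⊂ (0, ∞)). Suppose the set of eigenvalues of A has a maximal element R whose eigenspace H_R = Ker(A − R) is finite-dimensional. Let T : H → H be a linear operator which maps the ellipsoid E = {x ∈ H : ⟨x, Ax⟩ ≤ 1} bijectively onto itself and whose restriction to E is non-expansive. Then T(H_R) = H_R, T(H_R ∩ E) = H_R ∩ E, and the restriction of T to H_R is a bijective isometry. -/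
open RCLike in
/-- A symmetric positive operator kills vectors where its quadratic form vanishes. -/
lemma aux_pos_kernel_max9 {𝕜 H : Type*} [RCLike 𝕜] [NormedAddCommGroup H]
    [InnerProductSpace 𝕜 H] (B : H →L[𝕜] H) (hsym : (B : H →ₗ[𝕜] H).IsSymmetric)
    (hpos : ∀ x : H, 0 ≤ RCLike.re (inner 𝕜 x (B x) : 𝕜)) {z : H}
    (hz : RCLike.re (inner 𝕜 z (B z) : 𝕜) = 0) : B z = 0 := by
  have key : ∀ y : H, RCLike.re (inner 𝕜 y (B z) : 𝕜) = 0 := by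
    intro y
    set a := RCLike.re (inner 𝕜 y (B y) : 𝕜) with ha
    set b := RCLike.re (inner 𝕜 y (B z) : 𝕜) with hb
    have hrezy : RCLike.re (inner 𝕜 z (B y) : 𝕜) = b := by
      have h1 : (inner 𝕜 z (B y) : 𝕜) = inner 𝕜 (B z) y := (hsym z y).symm
      rw [h1, ← inner_conj_symm, RCLike.conj_re]
    have expand : ∀ t : ℝ, 0 ≤ t^2 * a + 2*t*b := by
      intro t
      have h0 := hpos (z + (t:𝕜) • y)
      have hB : B (z + (t:𝕜) • y) = B z + (t:𝕜) • B y := by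
        simp [map_add, map_smul]
      have hexp : (inner 𝕜 (z + (t:𝕜) • y) (B (z + (t:𝕜) • y)) : 𝕜)
          = inner 𝕜 z (B z) + (t:𝕜) * inner 𝕜 z (B y) + (t:𝕜) * inner 𝕜 y (B z)
            + (t:𝕜)^2 * inner 𝕜 y (B y) := by
        rw [hB]
        simp only [inner_add_left, inner_add_right, inner_smul_left, inner_smul_right,
          RCLike.conj_ofReal]
        ring
      rw [hexp] at h0
      simp only [map_add, RCLike.re_ofReal_mul] at h0
      have hsq : ((t:𝕜)^2 : 𝕜) = ((t^2 : ℝ) : 𝕜) := by push_cast; ring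
      rw [hsq, RCLike.re_ofReal_mul] at h0
      rw [hz] at h0
      rw [hrezy] at h0
      rw [← ha, ← hb] at h0
      linarith
    have hat : 0 ≤ a := hpos y
    have ha1 : (0:ℝ) < a + 1 := by linarith
    have h := expand (-b / (a+1))
    have h2 : 0 ≤ (b^2 * a - 2*b^2*(a+1)) / (a+1)^2 := by
      have : (-b/(a+1))^2 * a + 2*(-b/(a+1))*b = (b^2 * a - 2*b^2*(a+1)) / (a+1)^2 := by
        field_simp; ring
      linarith [this ▸ h]
    have h3 : 0 ≤ b^2 * a - 2*b^2*(a+1) := by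
      have := mul_nonneg h2 (sq_nonneg (a+1))
      have hne : ((a+1)^2 : ℝ) ≠ 0 := by positivity
      calc (0:ℝ) ≤ (b^2 * a - 2*b^2*(a+1)) / (a+1)^2 * (a+1)^2 := this
        _ = b^2 * a - 2*b^2*(a+1) := by field_simp
    nlinarith [sq_nonneg b]
  have h := key (B z)
  have : RCLike.re (inner 𝕜 (B z) (B z) : 𝕜) = ‖B z‖^2 := by
    rw [inner_self_eq_norm_sq]
  rw [this] at h
  have hn : ‖B z‖ = 0 := by nlinarith [norm_nonneg (B z)]
  exact norm_eq_zero.mp hn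


open RCLike Module.End in
lemma aux_q_le_max9 {𝕜 H : Type*} [RCLike 𝕜] [NormedAddCommGroup H]
    [InnerProductSpace 𝕜 H] [CompleteSpace H]
    (A : H →L[𝕜] H) (hA : IsSelfAdjoint A)
    (hdense : (⨆ μ : 𝕜, Module.End.eigenspace (A : H →ₗ[𝕜] H) μ).topologicalClosure = ⊤)
    (R : ℝ)
    (hRmax : ∀ μ : ℝ, Module.End.HasEigenvalue (A : H →ₗ[𝕜] H) (μ : 𝕜) → μ ≤ R)
    (x : H) : RCLike.re (inner 𝕜 x (A x) : 𝕜) ≤ R * ‖x‖^2 := by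
  have hAsym : (A : H →ₗ[𝕜] H).IsSymmetric := hA.isSymmetric
  -- the set where the inequality holds is closed
  have hclosed : IsClosed {y : H | RCLike.re (inner 𝕜 y (A y) : 𝕜) ≤ R * ‖y‖^2} := by
    have hc1 : Continuous fun y : H => RCLike.re (inner 𝕜 y (A y) : 𝕜) :=
      RCLike.continuous_re.comp (continuous_id.inner A.continuous)
    have hc2 : Continuous fun y : H => R * ‖y‖^2 := by continuity
    exact isClosed_le hc1 hc2
  -- it holds on the span of eigenvectors
  have hV : ∀ y ∈ (⨆ μ : 𝕜, Module.End.eigenspace (A : H →ₗ[𝕜] H) μ),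
      RCLike.re (inner 𝕜 y (A y) : 𝕜) ≤ R * ‖y‖^2 := by
    intro y hy
    obtain ⟨f, hf, hfy⟩ := (Submodule.mem_iSup_iff_exists_finsupp _ _).mp hy
    have hysum : y = ∑ i ∈ f.support, f i := by rw [← hfy]; rfl
    have horth : ∀ i j : 𝕜, i ≠ j → (inner 𝕜 (f i) (f j) : 𝕜) = 0 := by
      intro i j hij
      exact hAsym.orthogonalFamily_eigenspaces hij ⟨f i, hf i⟩ ⟨f j, hf j⟩
    have hinner : (inner 𝕜 y (A y) : 𝕜) = ∑ i ∈ f.support, (i * inner 𝕜 (f i) (f i) : 𝕜) := by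
      rw [hysum, map_sum, inner_sum]
      refine Finset.sum_congr rfl fun j hj => ?_
      have hAj : A (f j) = j • f j := Module.End.mem_eigenspace_iff.mp (hf j)
      rw [sum_inner, Finset.sum_eq_single_of_mem j hj]
      · rw [hAj, inner_smul_right]
      · intro i _ hij
        rw [hAj, inner_smul_right, horth i j hij, mul_zero]
    have hnorm : (inner 𝕜 y y : 𝕜) = ∑ i ∈ f.support, (inner 𝕜 (f i) (f i) : 𝕜) := by
      rw [hysum, inner_sum]
      refine Finset.sum_congr rfl fun j hj => ?_
      rw [sum_inner, Finset.sum_eq_single_of_mem j hj]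
      · intro i _ hij; exact horth i j hij
    have hnormsq : ‖y‖^2 = ∑ i ∈ f.support, ‖f i‖^2 := by
      have h1 : RCLike.re (inner 𝕜 y y : 𝕜) = ‖y‖^2 := inner_self_eq_norm_sq (𝕜 := 𝕜) y
      rw [← h1, hnorm, map_sum]
      refine Finset.sum_congr rfl fun i _ => inner_self_eq_norm_sq (𝕜 := 𝕜) (f i)
    rw [hinner, map_sum, hnormsq, Finset.mul_sum]
    refine Finset.sum_le_sum fun i hi => ?_
    by_cases hfi : f i = 0
    · simp [hfi]
    · have hev : Module.End.HasEigenvalue (A : H →ₗ[𝕜] H) i :=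
        Module.End.hasEigenvalue_of_hasEigenvector ⟨hf i, hfi⟩
      have hconj : (starRingEnd 𝕜) i = i := hAsym.conj_eigenvalue_eq_self hev
      have hreal : ((RCLike.re i : ℝ) : 𝕜) = i := RCLike.conj_eq_iff_re.mp hconj
      have hle : RCLike.re i ≤ R := by
        apply hRmax
        rwa [hreal]
      have hself : (inner 𝕜 (f i) (f i) : 𝕜) = ((‖f i‖^2 : ℝ) : 𝕜) := by
        rw [inner_self_eq_norm_sq_to_K]; norm_cast
      rw [hself, ← hreal, ← RCLike.ofReal_mul, RCLike.ofReal_re]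
      have := sq_nonneg ‖f i‖
      nlinarith
  -- conclude by density
  have hx : x ∈ closure (((⨆ μ : 𝕜, Module.End.eigenspace (A : H →ₗ[𝕜] H) μ) : Submodule 𝕜 H) : Set H) := by
    rw [← Submodule.topologicalClosure_coe]
    exact Submodule.eq_top_iff'.mp hdense x
  exact closure_minimal (fun y hy => hV y hy) hclosed hx

/-- **Statement 9.** Let `A` be a bounded self-adjoint operator (positively bounded below
on the sphere) on a separable infinite-dimensional Hilbert space `H`, whose eigenvectors
span a dense subspace of `H`. Suppose the set of eigenvalues has a maximal element `R`
whose eigenspace `H_R = Ker(A - R)` is finite-dimensional. If a linear operator `T`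
maps the ellipsoid `E = {x | ⟨x, Ax⟩ ≤ 1}` bijectively onto itself and is non-expansive
on `E`, then `T(H_R) = H_R`, `T(H_R ∩ E) = H_R ∩ E`, and `T` restricted to `H_R` is a
bijective isometry. -/
theorem max_eigenspace_invariant
    {𝕜 H : Type*} [RCLike 𝕜] [NormedAddCommGroup H] [InnerProductSpace 𝕜 H]
    [CompleteSpace H] [TopologicalSpace.SeparableSpace H]
    (hinf : ¬ FiniteDimensional 𝕜 H)
    (A : H →L[𝕜] H) (hA : IsSelfAdjoint A)
    (hpos : ∃ c : ℝ, 0 < c ∧ ∀ x : H, ‖x‖ = 1 → c ≤ RCLike.re (inner 𝕜 (A x) x : 𝕜))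
    (hdense : (⨆ μ : 𝕜, Module.End.eigenspace (A : H →ₗ[𝕜] H) μ).topologicalClosure = ⊤)
    (R : ℝ)
    (hR : Module.End.HasEigenvalue (A : H →ₗ[𝕜] H) (R : 𝕜))
    (hRmax : ∀ μ : ℝ, Module.End.HasEigenvalue (A : H →ₗ[𝕜] H) (μ : 𝕜) → μ ≤ R)
    (hfd : FiniteDimensional 𝕜 (Module.End.eigenspace (A : H →ₗ[𝕜] H) (R : 𝕜)))
    (T : H →ₗ[𝕜] H)
    (hTbij : Set.BijOn T {x : H | RCLike.re (inner 𝕜 x (A x) : 𝕜) ≤ 1}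
      {x : H | RCLike.re (inner 𝕜 x (A x) : 𝕜) ≤ 1})
    (hTne : ∀ x ∈ {x : H | RCLike.re (inner 𝕜 x (A x) : 𝕜) ≤ 1},
      ∀ y ∈ {x : H | RCLike.re (inner 𝕜 x (A x) : 𝕜) ≤ 1}, ‖T x - T y‖ ≤ ‖x - y‖) :
    T '' (Module.End.eigenspace (A : H →ₗ[𝕜] H) (R : 𝕜) : Set H)
      = (Module.End.eigenspace (A : H →ₗ[𝕜] H) (R : 𝕜) : Set H) ∧
    T '' ((Module.End.eigenspace (A : H →ₗ[𝕜] H) (R : 𝕜) : Set H)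
        ∩ {x : H | RCLike.re (inner 𝕜 x (A x) : 𝕜) ≤ 1})
      = (Module.End.eigenspace (A : H →ₗ[𝕜] H) (R : 𝕜) : Set H)
        ∩ {x : H | RCLike.re (inner 𝕜 x (A x) : 𝕜) ≤ 1} ∧
    Set.BijOn T (Module.End.eigenspace (A : H →ₗ[𝕜] H) (R : 𝕜) : Set H)
      (Module.End.eigenspace (A : H →ₗ[𝕜] H) (R : 𝕜) : Set H) ∧
    ∀ x ∈ (Module.End.eigenspace (A : H →ₗ[𝕜] H) (R : 𝕜) : Set H),
      ∀ y ∈ (Module.End.eigenspace (A : H →ₗ[𝕜] H) (R : 𝕜) : Set H),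
        ‖T x - T y‖ = ‖x - y‖ := by
  classical
  obtain ⟨c, hc, hcle⟩ := hpos
  set q : H → ℝ := fun x => RCLike.re (inner 𝕜 x (A x) : 𝕜) with hqdef
  set Ell : Set H := {x : H | RCLike.re (inner 𝕜 x (A x) : 𝕜) ≤ 1} with hEll
  set P : Submodule 𝕜 H := Module.End.eigenspace (A : H →ₗ[𝕜] H) (R : 𝕜) with hP
  have hmemEll : ∀ x : H, x ∈ Ell ↔ q x ≤ 1 := fun x => Iff.rfl
  -- q of a real scalar multiple
  have hq_smul : ∀ (t : ℝ) (x : H), q (((t:ℝ):𝕜) • x) = t^2 * q x := by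
    intro t x
    have h1 : A (((t:ℝ):𝕜) • x) = ((t:ℝ):𝕜) • A x := map_smul A _ _
    simp only [hqdef, h1, inner_smul_left, inner_smul_right, RCLike.conj_ofReal]
    rw [← mul_assoc, ← RCLike.ofReal_mul, RCLike.re_ofReal_mul]
    ring
  -- lower bound for q
  have hq_lower : ∀ x : H, c * ‖x‖^2 ≤ q x := by
    intro x
    rcases eq_or_ne x 0 with h | h
    · simp [h, hqdef]
    · have hn : (0:ℝ) < ‖x‖ := norm_pos_iff.mpr h
      have hunit : ‖((‖x‖⁻¹ : ℝ) : 𝕜) • x‖ = 1 := by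
        rw [norm_smul, RCLike.norm_ofReal, abs_of_pos (inv_pos.mpr hn)]
        field_simp
      have h1 := hcle _ hunit
      have h2 : (inner 𝕜 (A (((‖x‖⁻¹ : ℝ) : 𝕜) • x)) (((‖x‖⁻¹ : ℝ) : 𝕜) • x) : 𝕜)
          = ((‖x‖⁻¹^2 : ℝ) : 𝕜) * inner 𝕜 (A x) x := by
        rw [map_smul, inner_smul_left, inner_smul_right, RCLike.conj_ofReal, ← mul_assoc]
        norm_cast
        rw [sq]
      rw [h2, RCLike.re_ofReal_mul] at h1
      have h3 : RCLike.re (inner 𝕜 (A x) x : 𝕜) = q x := by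
        rw [hqdef, ← inner_conj_symm, RCLike.conj_re]
      rw [h3] at h1
      have h4 : ‖x‖⁻¹^2 * q x * ‖x‖^2 = q x := by
        field_simp
      nlinarith [sq_nonneg ‖x‖, hn]
  have hq_nonneg : ∀ x : H, 0 ≤ q x := fun x =>
    le_trans (by positivity) (hq_lower x)
  have hq_pos : ∀ x : H, x ≠ 0 → 0 < q x := by
    intro x hx
    have hn : (0:ℝ) < ‖x‖ := norm_pos_iff.mpr hx
    have h1 := hq_lower x
    have h2 : 0 < c * ‖x‖^2 := by positivity
    linarith
  have hEll0 : (0:H) ∈ Ell := by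
    simp [hEll]
  -- T is injective
  have hTinj : Function.Injective T := by
    have hker : ∀ z : H, T z = 0 → z = 0 := by
      intro z hz
      by_contra hzne
      set t : ℝ := (Real.sqrt (q z))⁻¹ with htdef
      have hqz : 0 < q z := hq_pos z hzne
      have hts : 0 < Real.sqrt (q z) := Real.sqrt_pos.mpr hqz
      have ht : 0 < t := inv_pos.mpr hts
      have hqw : q (((t:ℝ):𝕜) • z) = 1 := by
        rw [hq_smul t z, htdef, ← Real.sqrt_inv, Real.sq_sqrt (by positivity)]
        field_simp
      have hw : ((t:ℝ):𝕜) • z ∈ Ell := by rw [hmemEll, hqw]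
      have hTw : T (((t:ℝ):𝕜) • z) = T 0 := by
        rw [map_smul, hz, smul_zero, map_zero]
      have := hTbij.injOn hw hEll0 hTw
      have hzz : z = 0 := by
        have ht0 : ((t:ℝ):𝕜) ≠ 0 := by
          simpa using ne_of_gt ht
        exact (smul_eq_zero.mp this).resolve_left ht0
      exact hzne hzz
    intro x y hxy
    have : T (x - y) = 0 := by rw [map_sub, hxy, sub_self]
    exact sub_eq_zero.mp (hker _ this)
  -- membership in the ellipsoid is preserved in both directions
  have hmemiff : ∀ x : H, T x ∈ Ell ↔ x ∈ Ell := by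
    intro x
    constructor
    · intro h
      obtain ⟨y, hy, hyx⟩ := hTbij.surjOn h
      rwa [← hTinj hyx]
    · exact fun h => hTbij.mapsTo h
  -- T preserves the quadratic form
  have hqT : ∀ x : H, q (T x) = q x := by
    intro x
    have key : ∀ s : ℝ, 0 < s → (q x ≤ s ↔ q (T x) ≤ s) := by
      intro s hs
      have hts : 0 < Real.sqrt s := Real.sqrt_pos.mpr hs
      set t : ℝ := (Real.sqrt s)⁻¹ with htdef
      have ht : 0 < t := inv_pos.mpr hts
      have ht2 : t^2 = s⁻¹ := by
        rw [htdef, ← Real.sqrt_inv, Real.sq_sqrt (by positivity)]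
      have hTt : T (((t:ℝ):𝕜) • x) = ((t:ℝ):𝕜) • T x := map_smul T _ _
      constructor
      · intro h
        have hw : ((t:ℝ):𝕜) • x ∈ Ell := by
          rw [hmemEll, hq_smul, ht2]
          calc s⁻¹ * q x ≤ s⁻¹ * s := by
                have := inv_pos.mpr hs
                nlinarith
            _ = 1 := by field_simp
        have h2 := (hmemiff _).mpr hw
        rw [hTt, hmemEll, hq_smul, ht2] at h2
        have hsinv : 0 < s⁻¹ := inv_pos.mpr hs
        calc q (T x) = s * (s⁻¹ * q (T x)) := by field_simp
          _ ≤ s * 1 := by nlinarith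
          _ = s := by ring
      · intro h
        have hw : ((t:ℝ):𝕜) • T x ∈ Ell := by
          rw [hmemEll, hq_smul, ht2]
          calc s⁻¹ * q (T x) ≤ s⁻¹ * s := by
                have := inv_pos.mpr hs
                nlinarith
            _ = 1 := by field_simp
        rw [← hTt] at hw
        have h2 := (hmemiff _).mp hw
        rw [hmemEll, hq_smul, ht2] at h2
        have hsinv : 0 < s⁻¹ := inv_pos.mpr hs
        calc q x = s * (s⁻¹ * q x) := by field_simp
          _ ≤ s * 1 := by nlinarith
          _ = s := by ring
    have h1 : q x ≤ q (T x) := by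
      apply le_of_forall_pos_le_add
      intro ε hε
      have hs : 0 < q (T x) + ε := by
        have := hq_nonneg (T x); linarith
      exact (key _ hs).mpr (by linarith)
    have h2 : q (T x) ≤ q x := by
      apply le_of_forall_pos_le_add
      intro ε hε
      have hs : 0 < q x + ε := by
        have := hq_nonneg x; linarith
      exact (key _ hs).mp (by linarith)
    linarith
  -- T is globally non-expansive
  have hTnorm : ∀ x : H, ‖T x‖ ≤ ‖x‖ := by
    intro x
    rcases eq_or_ne x 0 with h | h
    · simp [h]
    · have hqx : 0 < q x := hq_pos x h
      have hts : 0 < Real.sqrt (q x) := Real.sqrt_pos.mpr hqx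
      set t : ℝ := (Real.sqrt (q x))⁻¹ with htdef
      have ht : 0 < t := inv_pos.mpr hts
      have hqw : q (((t:ℝ):𝕜) • x) = 1 := by
        rw [hq_smul, htdef, ← Real.sqrt_inv, Real.sq_sqrt (by positivity)]
        field_simp
      have hw : ((t:ℝ):𝕜) • x ∈ Ell := by rw [hmemEll, hqw]
      have h1 := hTne _ hw 0 hEll0
      rw [map_zero, sub_zero, sub_zero, map_smul] at h1
      rw [norm_smul, norm_smul, RCLike.norm_ofReal, abs_of_pos ht] at h1
      calc ‖T x‖ = t⁻¹ * (t * ‖T x‖) := by field_simp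
        _ ≤ t⁻¹ * (t * ‖x‖) := by
            have := inv_pos.mpr ht
            nlinarith
        _ = ‖x‖ := by field_simp
  -- the quadratic form is bounded by R ‖·‖²
  have hqleR : ∀ x : H, q x ≤ R * ‖x‖^2 := fun x => aux_q_le_max9 A hA hdense R hRmax x
  -- R is positive
  have hR0 : 0 < R := by
    obtain ⟨v, hv⟩ := hR.exists_hasEigenvector
    have hvne : v ≠ 0 := hv.right
    have hn : (0:ℝ) < ‖v‖ := norm_pos_iff.mpr hvne
    have hAv : A v = ((R:ℝ):𝕜) • v := Module.End.mem_eigenspace_iff.mp hv.left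
    have hqv : q v = R * ‖v‖^2 := by
      simp only [hqdef]
      rw [hAv, inner_smul_right, RCLike.re_ofReal_mul, inner_self_eq_norm_sq]
    have := hq_lower v
    rw [hqv] at this
    have h2 : (0:ℝ) < ‖v‖^2 := by positivity
    nlinarith [mul_pos hc h2]
  -- q on the eigenspace
  have hqP : ∀ z : H, z ∈ P → q z = R * ‖z‖^2 := by
    intro z hz
    have hAz : A z = ((R:ℝ):𝕜) • z := Module.End.mem_eigenspace_iff.mp hz
    simp only [hqdef]
    rw [hAz, inner_smul_right, RCLike.re_ofReal_mul, inner_self_eq_norm_sq]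
  -- the operator R - A
  set B : H →L[𝕜] H := ((R:ℝ):𝕜) • (ContinuousLinearMap.id 𝕜 H) - A with hBdef
  have hBapp : ∀ w : H, B w = ((R:ℝ):𝕜) • w - A w := by
    intro w; simp [hBdef]
  have hBinner : ∀ w : H, RCLike.re (inner 𝕜 w (B w) : 𝕜) = R * ‖w‖^2 - q w := by
    intro w
    rw [hBapp, inner_sub_right, inner_smul_right, map_sub, RCLike.re_ofReal_mul,
      inner_self_eq_norm_sq]
  have hBsym : (B : H →ₗ[𝕜] H).IsSymmetric := by
    intro u v
    have hAs := hA.isSymmetric u v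
    simp only [ContinuousLinearMap.coe_coe] at *
    rw [hBapp, hBapp, inner_sub_left, inner_sub_right, inner_smul_left, inner_smul_right,
      RCLike.conj_ofReal, hAs]
  have hBpos : ∀ w : H, 0 ≤ RCLike.re (inner 𝕜 w (B w) : 𝕜) := by
    intro w
    rw [hBinner]
    have := hqleR w
    linarith
  -- main step: T maps P into P isometrically
  have hstep : ∀ z : H, z ∈ P → T z ∈ P ∧ ‖T z‖ = ‖z‖ := by
    intro z hz
    have h1 : q (T z) = R * ‖z‖^2 := by rw [hqT, hqP z hz]
    have h2 : q (T z) ≤ R * ‖T z‖^2 := hqleR (T z)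
    have hle : ‖T z‖ ≤ ‖z‖ := hTnorm z
    have hsq : ‖z‖^2 ≤ ‖T z‖^2 := by nlinarith
    have hnorm : ‖T z‖ = ‖z‖ := by
      apply le_antisymm hle
      nlinarith [norm_nonneg (T z), norm_nonneg z]
    refine ⟨?_, hnorm⟩
    have hzero : RCLike.re (inner 𝕜 (T z) (B (T z)) : 𝕜) = 0 := by
      rw [hBinner, h1, hnorm]
      ring
    have hBz : B (T z) = 0 := aux_pos_kernel_max9 B hBsym hBpos hzero
    rw [hBapp] at hBz
    have : A (T z) = ((R:ℝ):𝕜) • T z := by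
      have := sub_eq_zero.mp hBz
      exact this.symm
    exact Module.End.mem_eigenspace_iff.mpr this
  have hmapsP : ∀ z ∈ P, T z ∈ P := fun z hz => (hstep z hz).1
  -- surjectivity on P via finite dimension
  have hsurjP : ∀ y ∈ P, ∃ x ∈ P, T x = y := by
    set Tres : P →ₗ[𝕜] P := T.restrict hmapsP with hTres
    have hinj : Function.Injective Tres := by
      intro a b hab
      have : T (a : H) = T (b : H) := congrArg Subtype.val hab
      exact Subtype.ext (hTinj this)
    have hsurj : Function.Surjective Tres := (LinearMap.injective_iff_surjective).mp hinj
    intro y hy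
    obtain ⟨x, hx⟩ := hsurj ⟨y, hy⟩
    exact ⟨(x : H), x.2, congrArg Subtype.val hx⟩
  -- conclusions
  refine ⟨?_, ?_, ?_, ?_⟩
  · apply Set.Subset.antisymm
    · rintro _ ⟨z, hz, rfl⟩
      exact hmapsP z hz
    · intro y hy
      obtain ⟨x, hx, hxy⟩ := hsurjP y hy
      exact ⟨x, hx, hxy⟩
  · apply Set.Subset.antisymm
    · rintro _ ⟨z, ⟨hz1, hz2⟩, rfl⟩
      exact ⟨hmapsP z hz1, hTbij.mapsTo hz2⟩
    · rintro y ⟨hy1, hy2⟩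
      obtain ⟨x, hx, hxy⟩ := hsurjP y hy1
      refine ⟨x, ⟨hx, ?_⟩, hxy⟩
      rw [hmemEll]
      have : q (T x) = q y := by rw [hxy]
      rw [← hqT x, this]
      exact hy2
  · refine ⟨fun z hz => hmapsP z hz, hTinj.injOn, ?_⟩
    intro y hy
    obtain ⟨x, hx, hxy⟩ := hsurjP y hy
    exact ⟨x, hx, hxy⟩
  · intro x hx y hy
    have hsub : x - y ∈ P := sub_mem hx hy
    rw [← map_sub]
    exact (hstep _ hsub).2
end

section
/- Let A be a bounded self-adjoint operator on a separable infinite-dimensional Hilbert space H with inf_{‖x‖=1} ⟨Ax, x⟩ > 0, and suppose that every subset of the set of eigenvalues σ_p(A) consisting of more than one element either has a maximum whose eigenspace is finite-dimensional or has a minimum whose eigenspace is finite-dimensional. Then there exists τ > 0 such that: (a) every nonempty subset of A⁺ := σ_p(A) ∩ (τ, +∞) has a maximal element; (b) every nonempty subset of A⁻ := σ_p(A) ∩ (0, τ) has a minimal element; and (c) every eigenvalue in A⁺ ∪ A⁻ has a finite-dimensional eigenspace. -/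
/-- **Claim 1.** Let `A` be a bounded self-adjoint operator (positively
bounded below on the sphere) on a separable infinite-dimensional Hilbert space `H`, such
that every subset of the set of eigenvalues of `A` with more than one element has either a
maximum of finite multiplicity or a minimum of finite multiplicity. Then there is `τ > 0`
such that every nonempty subset of `A⁺ = σ_p(A) ∩ (τ, ∞)` has a maximal element, every
nonempty subset of `A⁻ = σ_p(A) ∩ (0, τ)` has a minimal element, and every eigenvalue in
`A⁺ ∪ A⁻` has finite-dimensional eigenspace. -/
theorem exists_tau_well_ordering_eigenvalues
    {𝕜 H : Type*} [RCLike 𝕜] [NormedAddCommGroup H] [InnerProductSpace 𝕜 H]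
    [CompleteSpace H] [TopologicalSpace.SeparableSpace H]
    (hinf : ¬ FiniteDimensional 𝕜 H)
    (A : H →L[𝕜] H) (hA : IsSelfAdjoint A)
    (hpos : ∃ c : ℝ, 0 < c ∧ ∀ x : H, ‖x‖ = 1 → c ≤ RCLike.re (inner 𝕜 (A x) x : 𝕜))
    (hcond : ∀ B ⊆ {μ : ℝ | Module.End.HasEigenvalue (A : H →ₗ[𝕜] H) (μ : 𝕜)},
      B.Nontrivial →
        ((∃ m ∈ B, (∀ b ∈ B, b ≤ m) ∧
            FiniteDimensional 𝕜 (Module.End.eigenspace (A : H →ₗ[𝕜] H) (m : 𝕜))) ∨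
         (∃ m ∈ B, (∀ b ∈ B, m ≤ b) ∧
            FiniteDimensional 𝕜 (Module.End.eigenspace (A : H →ₗ[𝕜] H) (m : 𝕜))))) :
    ∃ τ : ℝ, 0 < τ ∧
      (∀ D ⊆ {μ : ℝ | Module.End.HasEigenvalue (A : H →ₗ[𝕜] H) (μ : 𝕜)} ∩ Set.Ioi τ,
        D.Nonempty → ∃ m ∈ D, ∀ b ∈ D, b ≤ m) ∧
      (∀ D ⊆ {μ : ℝ | Module.End.HasEigenvalue (A : H →ₗ[𝕜] H) (μ : 𝕜)} ∩ Set.Ioo 0 τ,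
        D.Nonempty → ∃ m ∈ D, ∀ b ∈ D, m ≤ b) ∧
      (∀ μ ∈ {μ : ℝ | Module.End.HasEigenvalue (A : H →ₗ[𝕜] H) (μ : 𝕜)}
          ∩ (Set.Ioi τ ∪ Set.Ioo 0 τ),
        FiniteDimensional 𝕜 (Module.End.eigenspace (A : H →ₗ[𝕜] H) (μ : 𝕜))) := by
  obtain ⟨c, hc, hcle⟩ := hpos
  set Sig : Set ℝ := {μ : ℝ | Module.End.HasEigenvalue (A : H →ₗ[𝕜] H) (μ : 𝕜)} with hSigdef
  -- eigenvalue bounds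
  have hbnd : ∀ μ ∈ Sig, c ≤ μ ∧ μ ≤ ‖A‖ := by
    intro μ hμ
    obtain ⟨x, hx⟩ := Module.End.HasEigenvalue.exists_hasEigenvector hμ
    have hx0 : x ≠ 0 := hx.right
    have hxn : ‖x‖ ≠ 0 := norm_ne_zero_iff.2 hx0
    set y : H := ((‖x‖⁻¹ : ℝ) : 𝕜) • x with hy
    have hny : ‖y‖ = 1 := by
      rw [hy, norm_smul]
      simp [inv_mul_cancel₀ hxn, abs_of_nonneg (norm_nonneg x)]
    have hAx : A x = (μ : 𝕜) • x := hx.apply_eq_smul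
    have hAy : A y = (μ : 𝕜) • y := by
      rw [hy, map_smul, hAx, smul_comm]
    have h1 : RCLike.re (inner 𝕜 (A y) y : 𝕜) = μ := by
      rw [hAy, inner_smul_left, inner_self_eq_norm_sq_to_K, hny]
      simp [RCLike.conj_ofReal]
    constructor
    · have := hcle y hny; rw [h1] at this; exact this
    · have h2 : ‖A y‖ = |μ| * ‖y‖ := by rw [hAy, norm_smul]; simp
      have h3 : ‖A y‖ ≤ ‖A‖ * ‖y‖ := A.le_opNorm y
      rw [h2, hny, mul_one, mul_one] at h3
      exact le_trans (le_abs_self μ) h3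
  have hlow : ∀ μ ∈ Sig, c ≤ μ := fun μ hμ => (hbnd μ hμ).1
  -- key pair lemma: elements of a max-less set are ≤ elements of a min-less set
  have key : ∀ D₁ : Set ℝ, D₁ ⊆ Sig → (¬ ∃ m ∈ D₁, ∀ b ∈ D₁, b ≤ m) →
      ∀ D₂ : Set ℝ, D₂ ⊆ Sig → (¬ ∃ m ∈ D₂, ∀ b ∈ D₂, m ≤ b) →
      ∀ e ∈ D₁, ∀ x ∈ D₂, e ≤ x := by
    intro D₁ hD₁ hmax D₂ hD₂ hmin e he x hx
    by_contra hlt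
    push_neg at hlt hmax hmin
    set S : Set ℝ := {w | (w ∈ D₁ ∧ x < w) ∨ (w ∈ D₂ ∧ w < e)} with hSdef
    have heS : e ∈ S := Or.inl ⟨he, hlt⟩
    have hxS : x ∈ S := Or.inr ⟨hx, hlt⟩
    have hsub : S ⊆ Sig := by rintro w (⟨hw, -⟩ | ⟨hw, -⟩); exacts [hD₁ hw, hD₂ hw]
    have hnt : S.Nontrivial := ⟨e, heS, x, hxS, ne_of_gt hlt⟩
    rcases hcond S hsub hnt with ⟨m, hmS, hub, -⟩ | ⟨m, hmS, hlb, -⟩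
    · rcases hmS with ⟨hmD, hxm⟩ | ⟨hmD, hme⟩
      · obtain ⟨b, hb, hbm⟩ := hmax m hmD
        exact absurd (hub b (Or.inl ⟨hb, hxm.trans hbm⟩)) (not_le.2 hbm)
      · exact absurd (hub e heS) (not_le.2 hme)
    · rcases hmS with ⟨hmD, hxm⟩ | ⟨hmD, hme⟩
      · exact absurd (hlb x hxS) (not_le.2 hxm)
      · obtain ⟨b, hb, hbm⟩ := hmin m hmD
        exact absurd (hlb b (Or.inr ⟨hb, hbm.trans hme⟩)) (not_le.2 hbm)
  by_cases hL : ∃ l ∈ Sig,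
      ¬ FiniteDimensional 𝕜 (Module.End.eigenspace (A : H →ₗ[𝕜] H) (l : 𝕜))
  · obtain ⟨l, hlS, hlfin⟩ := hL
    have hlpos : 0 < l := lt_of_lt_of_le hc (hlow l hlS)
    -- elements of max-less sets are ≤ l
    have key5 : ∀ D : Set ℝ, D ⊆ Sig → (¬ ∃ m ∈ D, ∀ b ∈ D, b ≤ m) →
        ∀ e ∈ D, e ≤ l := by
      intro D hD hmax e he
      by_contra hlt
      push_neg at hlt hmax
      set S : Set ℝ := {w | w = l ∨ (w ∈ D ∧ l < w)} with hSdef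
      have hlSmem : l ∈ S := Or.inl rfl
      have heS : e ∈ S := Or.inr ⟨he, hlt⟩
      have hsub : S ⊆ Sig := by rintro w (rfl | ⟨hw, -⟩); exacts [hlS, hD hw]
      have hnt : S.Nontrivial := ⟨e, heS, l, hlSmem, ne_of_gt hlt⟩
      rcases hcond S hsub hnt with ⟨m, hmS, hub, hfin⟩ | ⟨m, hmS, hlb, hfin⟩
      · rcases hmS with rfl | ⟨hmD, hlm⟩
        · exact absurd (hub e heS) (not_le.2 hlt)
        · obtain ⟨b, hb, hbm⟩ := hmax m hmD
          exact absurd (hub b (Or.inr ⟨hb, hlm.trans hbm⟩)) (not_le.2 hbm)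
      · rcases hmS with rfl | ⟨hmD, hlm⟩
        · exact hlfin hfin
        · exact absurd (hlb l hlSmem) (not_le.2 hlm)
    -- elements of min-less sets are ≥ l
    have key6 : ∀ D : Set ℝ, D ⊆ Sig → (¬ ∃ m ∈ D, ∀ b ∈ D, m ≤ b) →
        ∀ e ∈ D, l ≤ e := by
      intro D hD hmin e he
      by_contra hlt
      push_neg at hlt hmin
      set S : Set ℝ := {w | w = l ∨ (w ∈ D ∧ w < l)} with hSdef
      have hlSmem : l ∈ S := Or.inl rfl
      have heS : e ∈ S := Or.inr ⟨he, hlt⟩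
      have hsub : S ⊆ Sig := by rintro w (rfl | ⟨hw, -⟩); exacts [hlS, hD hw]
      have hnt : S.Nontrivial := ⟨e, heS, l, hlSmem, ne_of_lt hlt⟩
      rcases hcond S hsub hnt with ⟨m, hmS, hub, hfin⟩ | ⟨m, hmS, hlb, hfin⟩
      · rcases hmS with rfl | ⟨hmD, hlm⟩
        · exact hlfin hfin
        · exact absurd (hub l hlSmem) (not_le.2 hlm)
      · rcases hmS with rfl | ⟨hmD, hlm⟩
        · exact absurd (hlb e heS) (not_le.2 hlt)
        · obtain ⟨b, hb, hbm⟩ := hmin m hmD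
          exact absurd (hlb b (Or.inr ⟨hb, hbm.trans hlm⟩)) (not_le.2 hbm)
    refine ⟨l, hlpos, ?_, ?_, ?_⟩
    · intro D hD hne
      by_contra hmax
      obtain ⟨e, he⟩ := hne
      have h1 : e ≤ l := key5 D (fun z hz => (hD hz).1) hmax e he
      exact absurd h1 (not_le.2 ((hD he).2))
    · intro D hD hne
      by_contra hmin
      obtain ⟨e, he⟩ := hne
      have h1 : l ≤ e := key6 D (fun z hz => (hD hz).1) hmin e he
      exact absurd h1 (not_le.2 ((hD he).2.2))
    · intro μ hμ
      by_contra hnf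
      have hne : l ≠ μ := by
        rcases hμ.2 with h | h
        · exact ne_of_lt h
        · exact ne_of_gt h.2
      have hpair : ({l, μ} : Set ℝ) ⊆ Sig := by
        rintro w (rfl | rfl); exacts [hlS, hμ.1]
      have hnt : ({l, μ} : Set ℝ).Nontrivial := ⟨l, Or.inl rfl, μ, Or.inr rfl, hne⟩
      rcases hcond _ hpair hnt with ⟨m, hm, -, hfin⟩ | ⟨m, hm, -, hfin⟩ <;>
        rcases hm with rfl | rfl <;> first | exact hlfin hfin | exact hnf hfin
  · push_neg at hL
    by_cases hBU : ∃ D : Set ℝ, D ⊆ Sig ∧ D.Nonempty ∧ ¬ ∃ m ∈ D, ∀ b ∈ D, b ≤ m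
    · obtain ⟨D₀, hD₀s, ⟨e₀, he₀⟩, hD₀max⟩ := hBU
      set E : Set ℝ := {x | ∃ D : Set ℝ, D ⊆ Sig ∧ (¬ ∃ m ∈ D, ∀ b ∈ D, b ≤ m) ∧ x ∈ D}
        with hEdef
      have hEne : E.Nonempty := ⟨e₀, D₀, hD₀s, hD₀max, he₀⟩
      have hEbdd : BddAbove E := by
        refine ⟨‖A‖, ?_⟩
        rintro x ⟨D, hDs, -, hxD⟩
        exact (hbnd x (hDs hxD)).2
      have he₀E : e₀ ∈ E := ⟨D₀, hD₀s, hD₀max, he₀⟩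
      have hτc : c ≤ sSup E := le_trans (hlow e₀ (hD₀s he₀)) (le_csSup hEbdd he₀E)
      refine ⟨sSup E, lt_of_lt_of_le hc hτc, ?_, ?_, ?_⟩
      · intro D hD hne
        by_contra hmax
        obtain ⟨e, he⟩ := hne
        have heE : e ∈ E := ⟨D, fun z hz => (hD hz).1, hmax, he⟩
        exact absurd (le_csSup hEbdd heE) (not_le.2 (hD he).2)
      · intro D hD hne
        by_contra hmin
        obtain ⟨x, hx⟩ := hne
        have h1 : sSup E ≤ x := by
          refine csSup_le hEne ?_
          rintro e ⟨D₁, hD₁s, hD₁max, heD₁⟩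
          exact key D₁ hD₁s hD₁max D (fun z hz => (hD hz).1) hmin e heD₁ x hx
        exact absurd h1 (not_le.2 (hD hx).2.2)
      · intro μ hμ
        exact hL μ hμ.1
    · refine ⟨c, hc, ?_, ?_, ?_⟩
      · intro D hD hne
        by_contra hmax
        exact hBU ⟨D, fun z hz => (hD hz).1, hne, hmax⟩
      · intro D hD hne
        obtain ⟨e, he⟩ := hne
        exact absurd (hlow e (hD he).1) (not_le.2 (hD he).2.2)
      · intro μ hμ
        exact hL μ hμ.1
end

section
/- Let A be a bounded self-adjoint operator on a separable infinite-dimensional Hilbert space H with inf_{‖x‖=1} ⟨Ax, x⟩ > 0, whose eigenvectors span a dense subspace of H. Let τ > 0 be such that every nonempty subset of A⁺ := σ_p(A) ∩ (τ, +∞) has a maximal element, every nonempty subset of A⁻ := σ_p(A) ∩ (0, τ) has a minimal element, and every eigenvalue in A⁺ ∪ A⁻ has a finite-dimensional eigenspace. Let H⁺ (respectively H⁻) be the closed linear span of all eigenvectors of A whose eigenvalue lies in A⁺ (respectively in A⁻). Let T : H → H be a linear operator which maps the ellipsoid E = {x ∈ H : ⟨x, Ax⟩ ≤ 1} bijectively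 onto itself and whose restriction to E is non-expansive. Then T(H⁻) = H⁻, T(H⁺) = H⁺, and the restrictions of T to H⁻ and to H⁺ are bijective isometries. -/
/-- The closed linear span of all eigenvectors of `A` whose (real) eigenvalue lies in the
set `B ⊆ ℝ`, i.e. the topological closure of the sum of the corresponding eigenspaces. -/
def closedEigenSpan {𝕜 H : Type*} [RCLike 𝕜] [NormedAddCommGroup H]
    [InnerProductSpace 𝕜 H] (A : H →L[𝕜] H) (B : Set ℝ) : Submodule 𝕜 H :=
  (⨆ μ ∈ B, Module.End.eigenspace (A : H →ₗ[𝕜] H) (μ : 𝕜)).topologicalClosure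


open Module.End Set Submodule Finset

section Aux
variable {𝕜 H : Type*} [RCLike 𝕜] [NormedAddCommGroup H] [InnerProductSpace 𝕜 H]

local notation "⟪" x ", " y "⟫" => @inner 𝕜 _ _ x y

/-- eigenspace of a CLM at a real value -/
def ES (A : H →L[𝕜] H) (μ : ℝ) : Submodule 𝕜 H :=
  Module.End.eigenspace (A : H →ₗ[𝕜] H) ((μ : ℝ) : 𝕜)

lemma mem_ES {A : H →L[𝕜] H} {μ : ℝ} {x : H} : x ∈ ES A μ ↔ A x = ((μ:ℝ):𝕜) • x :=
  Module.End.mem_eigenspace_iff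

lemma ES_apply {A : H →L[𝕜] H} {μ : ℝ} {x : H} (hx : x ∈ ES A μ) : A x = ((μ:ℝ):𝕜) • x :=
  mem_ES.mp hx

/-- decomposition of elements of a supremum of eigenspaces -/
lemma mem_iSup_decomp (A : H →L[𝕜] H) (B : Set ℝ) {x : H}
    (hx : x ∈ ⨆ μ ∈ B, ES A μ) :
    ∃ f : ℝ →₀ H, (∀ μ, f μ ∈ ES A μ) ∧ (∀ μ ∈ f.support, μ ∈ B) ∧
      x = ∑ μ ∈ f.support, f μ := by
  refine Submodule.iSup_induction' (p := fun μ : ℝ => ⨆ _ : μ ∈ B, ES A μ)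
      (motive := fun x _ => ∃ f : ℝ →₀ H,
      (∀ μ, f μ ∈ ES A μ) ∧ (∀ μ ∈ f.support, μ ∈ B) ∧ x = ∑ μ ∈ f.support, f μ)
      (mem := ?_) (zero := ?_) (add := ?_) (hx := hx)
  · intro μ x hx
    by_cases hμ : μ ∈ B
    · replace hx : x ∈ ES A μ := by simpa [hμ] using hx
      refine ⟨Finsupp.single μ x, ?_, ?_, ?_⟩
      · intro ν
        rcases eq_or_ne μ ν with rfl | hne
        · simpa using hx
        · rw [Finsupp.single_eq_of_ne hne.symm]; exact zero_mem _
      · intro ν hν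
        have := Finsupp.support_single_subset hν
        simp only [Finset.mem_singleton] at this
        exact this ▸ hμ
      · rcases eq_or_ne x 0 with rfl | hx0
        · simp
        · rw [Finsupp.support_single_ne_zero _ hx0]
          simp
    · replace hx : x = 0 := by simpa [hμ] using hx
      exact ⟨0, by simp, by simp, by simpa using hx⟩
  · exact ⟨0, by simp, by simp, by simp⟩
  · rintro x y hxm hym ⟨f, hf1, hf2, rfl⟩ ⟨g, hg1, hg2, rfl⟩
    refine ⟨f + g, fun μ => by simpa using add_mem (hf1 μ) (hg1 μ), ?_, ?_⟩
    · intro ν hν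
      rcases Finset.mem_union.mp (Finsupp.support_add hν) with h | h
      exacts [hf2 ν h, hg2 ν h]
    · have h1 : ∑ μ ∈ f.support, f μ = ∑ μ ∈ (f+g).support ∪ f.support ∪ g.support, f μ := by
        refine Finset.sum_subset ?_ ?_
        · intro a ha; simp [Finset.mem_union, ha]
        · intro a ha hna; exact Finsupp.notMem_support_iff.mp hna
      have h2 : ∑ μ ∈ g.support, g μ = ∑ μ ∈ (f+g).support ∪ f.support ∪ g.support, g μ := by
        refine Finset.sum_subset ?_ ?_
        · intro a ha; simp [Finset.mem_union, ha]
        · intro a ha hna; exact Finsupp.notMem_support_iff.mp hna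
      have h3 : ∑ μ ∈ (f+g).support, (f+g) μ
          = ∑ μ ∈ (f+g).support ∪ f.support ∪ g.support, (f+g) μ := by
        refine Finset.sum_subset ?_ ?_
        · intro a ha; simp [Finset.mem_union, ha]
        · intro a ha hna; exact Finsupp.notMem_support_iff.mp hna
      rw [h1, h2, h3, ← Finset.sum_add_distrib]
      simp

lemma inner_sum_eigen {A : H →L[𝕜] H} (hA : (A : H →ₗ[𝕜] H).IsSymmetric)
    (F : Finset ℝ) (f g : ℝ → H)
    (hf : ∀ μ ∈ F, f μ ∈ ES A μ) (hg : ∀ μ ∈ F, g μ ∈ ES A μ) :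
    ⟪∑ μ ∈ F, f μ, ∑ μ ∈ F, g μ⟫ = ∑ μ ∈ F, ⟪f μ, g μ⟫ := by
  rw [sum_inner]
  refine Finset.sum_congr rfl fun μ hμ => ?_
  rw [inner_sum]
  refine Finset.sum_eq_single_of_mem μ hμ fun ν hν hne => ?_
  have hone : ((μ:ℝ):𝕜) ≠ ((ν:ℝ):𝕜) := by
    simp only [ne_eq, RCLike.ofReal_inj]
    exact fun h => hne h.symm
  exact hA.orthogonalFamily_eigenspaces hone ⟨f μ, hf μ hμ⟩ ⟨g ν, hg ν hν⟩

lemma norm_sq_sum_eigen {A : H →L[𝕜] H} (hA : (A : H →ₗ[𝕜] H).IsSymmetric)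
    (F : Finset ℝ) (f : ℝ → H) (hf : ∀ μ ∈ F, f μ ∈ ES A μ) :
    ‖∑ μ ∈ F, f μ‖ ^ 2 = ∑ μ ∈ F, ‖f μ‖ ^ 2 := by
  have := inner_sum_eigen hA F f f hf hf
  have h2 := congrArg (RCLike.re (K := 𝕜)) this
  rw [inner_self_eq_norm_sq, map_sum] at h2
  rw [h2]
  exact Finset.sum_congr rfl fun μ _ => inner_self_eq_norm_sq _

lemma q_sum_eigen {A : H →L[𝕜] H} (hA : (A : H →ₗ[𝕜] H).IsSymmetric)
    (F : Finset ℝ) (f : ℝ → H) (hf : ∀ μ ∈ F, f μ ∈ ES A μ) :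
    RCLike.re ⟪∑ μ ∈ F, f μ, A (∑ μ ∈ F, f μ)⟫ = ∑ μ ∈ F, μ * ‖f μ‖ ^ 2 := by
  have hAg : ∀ μ ∈ F, A (f μ) ∈ ES A μ := by
    intro μ hμ
    rw [ES_apply (hf μ hμ)]
    exact Submodule.smul_mem _ _ (hf μ hμ)
  have hmap : A (∑ μ ∈ F, f μ) = ∑ μ ∈ F, A (f μ) := map_sum A f F
  rw [hmap, inner_sum_eigen hA F f (fun μ => A (f μ)) hf hAg, map_sum]
  refine Finset.sum_congr rfl fun μ hμ => ?_
  rw [ES_apply (hf μ hμ), inner_smul_right]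
  rw [RCLike.re_ofReal_mul, inner_self_eq_norm_sq]

lemma q_le_on_closure {A : H →L[𝕜] H} (hA : (A : H →ₗ[𝕜] H).IsSymmetric)
    {B : Set ℝ} {s : ℝ} (hB : ∀ μ ∈ B, μ ≤ s) {x : H}
    (hx : x ∈ (⨆ μ ∈ B, ES A μ).topologicalClosure) :
    RCLike.re ⟪x, A x⟫ ≤ s * ‖x‖ ^ 2 := by
  have hclosed : IsClosed {y : H | RCLike.re ⟪y, A y⟫ ≤ s * ‖y‖ ^ 2} := by
    apply isClosed_le
    · exact (RCLike.continuous_re.comp (continuous_id.inner A.continuous))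
    · exact (continuous_const.mul ((continuous_norm).pow 2))
  have hsub : ((⨆ μ ∈ B, ES A μ : Submodule 𝕜 H) : Set H)
      ⊆ {y : H | RCLike.re ⟪y, A y⟫ ≤ s * ‖y‖ ^ 2} := by
    intro y hy
    obtain ⟨f, hf1, hf2, rfl⟩ := mem_iSup_decomp A B hy
    have h1 := q_sum_eigen hA f.support f (fun μ _ => hf1 μ)
    have h2 := norm_sq_sum_eigen hA f.support f (fun μ _ => hf1 μ)
    simp only [Set.mem_setOf_eq, h1, h2, Finset.mul_sum]
    refine Finset.sum_le_sum fun μ hμ => ?_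
    exact mul_le_mul_of_nonneg_right (hB μ (hf2 μ hμ)) (by positivity)
  have : x ∈ closure ((⨆ μ ∈ B, ES A μ : Submodule 𝕜 H) : Set H) := hx
  exact closure_minimal hsub hclosed this

lemma q_ge_on_closure {A : H →L[𝕜] H} (hA : (A : H →ₗ[𝕜] H).IsSymmetric)
    {B : Set ℝ} {s : ℝ} (hB : ∀ μ ∈ B, s ≤ μ) {x : H}
    (hx : x ∈ (⨆ μ ∈ B, ES A μ).topologicalClosure) :
    s * ‖x‖ ^ 2 ≤ RCLike.re ⟪x, A x⟫ := by
  have hclosed : IsClosed {y : H | s * ‖y‖ ^ 2 ≤ RCLike.re ⟪y, A y⟫} := by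
    apply isClosed_le
    · exact (continuous_const.mul ((continuous_norm).pow 2))
    · exact (RCLike.continuous_re.comp (continuous_id.inner A.continuous))
  have hsub : ((⨆ μ ∈ B, ES A μ : Submodule 𝕜 H) : Set H)
      ⊆ {y : H | s * ‖y‖ ^ 2 ≤ RCLike.re ⟪y, A y⟫} := by
    intro y hy
    obtain ⟨f, hf1, hf2, rfl⟩ := mem_iSup_decomp A B hy
    have h1 := q_sum_eigen hA f.support f (fun μ _ => hf1 μ)
    have h2 := norm_sq_sum_eigen hA f.support f (fun μ _ => hf1 μ)
    simp only [Set.mem_setOf_eq, h1, h2, Finset.mul_sum]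
    refine Finset.sum_le_sum fun μ hμ => ?_
    exact mul_le_mul_of_nonneg_right (hB μ (hf2 μ hμ)) (by positivity)
  have : x ∈ closure ((⨆ μ ∈ B, ES A μ : Submodule 𝕜 H) : Set H) := hx
  exact closure_minimal hsub hclosed this

lemma quad_nonneg_zero {a b : ℝ} (h : ∀ t : ℝ, 0 ≤ a * t ^ 2 + 2 * b * t) : b = 0 := by
  by_contra hb
  have hb2 : (0:ℝ) < b ^ 2 := by positivity
  set s : ℝ := (|a| + 1)⁻¹ with hs
  have hspos : (0:ℝ) < s := by positivity
  have h1 := h (-(s * b))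
  have e : a * (-(s * b)) ^ 2 + 2 * b * -(s * b) = s * b ^ 2 * (a * s - 2) := by ring
  rw [e] at h1
  have hsb : (0:ℝ) < s * b ^ 2 := by positivity
  have hlt : a * s - 2 < 0 := by
    have h2 : a * s ≤ |a| * s := mul_le_mul_of_nonneg_right (le_abs_self a) hspos.le
    have h3 : |a| * s < 1 := by
      rw [hs, ← div_eq_mul_inv]
      exact (div_lt_one (by positivity)).mpr (by linarith [abs_nonneg a])
    linarith
  exact absurd h1 (not_le.mpr (mul_neg_of_pos_of_neg hsb hlt))

lemma mem_iSup_ES {A : H →L[𝕜] H} {B : Set ℝ} {μ : ℝ} (hμ : μ ∈ B) {x : H}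
    (hx : x ∈ ES A μ) : x ∈ ⨆ ν ∈ B, ES A ν :=
  Submodule.mem_iSup_of_mem μ (by rw [iSup_pos hμ]; exact hx)

lemma psd_inner_zero {B : H →L[𝕜] H} (hB : ∀ x y : H, ⟪B x, y⟫ = ⟪x, B y⟫)
    (V : Submodule 𝕜 H)
    (hpsd : ∀ v ∈ V, 0 ≤ RCLike.re ⟪v, B v⟫) {u : H} (hu : u ∈ V)
    (huB : B u ∈ V)
    (h0 : RCLike.re ⟪u, B u⟫ = 0) : B u = 0 := by
  have hre : ∀ x ∈ V, RCLike.re ⟪x, B u⟫ = 0 := by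
    intro x hx
    refine quad_nonneg_zero (a := RCLike.re ⟪x, B x⟫) ?_
    intro t
    have hmem : u + ((t:ℝ):𝕜) • x ∈ V := add_mem hu (Submodule.smul_mem _ _ hx)
    have hexp := hpsd _ hmem
    have hxu : ⟪u, B x⟫ = starRingEnd 𝕜 ⟪x, B u⟫ := by
      rw [← hB x u, ← inner_conj_symm]
    have e1 : ⟪u + ((t:ℝ):𝕜) • x, B (u + ((t:ℝ):𝕜) • x)⟫
        = ⟪u, B u⟫ + ((t:ℝ):𝕜) * ⟪u, B x⟫ + ((t:ℝ):𝕜) * ⟪x, B u⟫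
          + ((t:ℝ):𝕜) * ((t:ℝ):𝕜) * ⟪x, B x⟫ := by
      rw [map_add, map_smul, inner_add_left, inner_add_right, inner_add_right,
        inner_smul_left, inner_smul_right, inner_smul_left, inner_smul_right,
        RCLike.conj_ofReal]
      ring
    have e2 : RCLike.re ⟪u + ((t:ℝ):𝕜) • x, B (u + ((t:ℝ):𝕜) • x)⟫
        = RCLike.re ⟪x, B x⟫ * t ^ 2 + 2 * RCLike.re ⟪x, B u⟫ * t := by
      rw [e1]
      have : ((t:ℝ):𝕜) * ((t:ℝ):𝕜) * ⟪x, B x⟫ = (((t^2 : ℝ)):𝕜) * ⟪x, B x⟫ := by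
        push_cast; ring
      rw [this]
      simp only [map_add, RCLike.re_ofReal_mul, h0, hxu, RCLike.conj_re]
      ring
    rw [e2] at hexp
    exact hexp
  have him : ∀ x ∈ V, ⟪x, B u⟫ = 0 := by
    intro x hx
    have h1 := hre x hx
    have h2 := hre ((RCLike.I : 𝕜) • x) (Submodule.smul_mem _ _ hx)
    rw [inner_smul_left, RCLike.conj_I, neg_mul, map_neg, RCLike.I_mul_re, neg_neg] at h2
    exact RCLike.ext (by simpa using h1) (by simpa using h2)
  have := him (B u) huB
  exact inner_self_eq_zero.mp this

lemma closure_iSup_ES_invariant {A : H →L[𝕜] H} (B : Set ℝ) :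
    ∀ v ∈ (⨆ μ ∈ B, ES A μ).topologicalClosure,
      A v ∈ (⨆ μ ∈ B, ES A μ).topologicalClosure := by
  set M : Submodule 𝕜 H := ⨆ μ ∈ B, ES A μ with hM
  have h1 : ∀ x ∈ M, A x ∈ M := by
    intro x hx
    refine Submodule.iSup_induction' (p := fun μ : ℝ => ⨆ _ : μ ∈ B, ES A μ)
      (motive := fun x _ => A x ∈ M) (mem := ?_) (zero := by simp) (add := ?_) (hx := hx)
    · intro μ x hx
      by_cases hμ : μ ∈ B
      · replace hx : x ∈ ES A μ := by simpa [hμ] using hx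
        exact mem_iSup_ES hμ (by rw [ES_apply hx]; exact Submodule.smul_mem _ _ hx)
      · replace hx : x = 0 := by simpa [hμ] using hx
        simp [hx]
    · intro x y _ _ h h'
      rw [map_add]; exact add_mem h h'
  intro v hv
  have h2 : M.topologicalClosure ≤
      Submodule.comap (A : H →ₗ[𝕜] H) M.topologicalClosure := by
    apply Submodule.topologicalClosure_minimal
    · intro x hx
      exact Submodule.le_topologicalClosure _ (h1 x hx)
    · exact (Submodule.isClosed_topologicalClosure _).preimage A.continuous
  exact h2 hv

lemma orthogonal_closure (K : Submodule 𝕜 H) : K.topologicalClosureᗮ = Kᗮ := by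
  refine le_antisymm (Submodule.orthogonal_le K.le_topologicalClosure) ?_
  intro v hv
  rw [Submodule.mem_orthogonal] at hv ⊢
  intro u hu
  have hu' : u ∈ closure (K : Set H) := hu
  have hcl : IsClosed {w : H | ⟪w, v⟫ = 0} :=
    isClosed_eq (continuous_id.inner continuous_const) continuous_const
  exact closure_minimal (fun w hw => hv w hw) hcl hu'

lemma partition_orthogonal [CompleteSpace H] {A : H →L[𝕜] H}
    (hA : (A : H →ₗ[𝕜] H).IsSymmetric)
    (hdense : (⨆ μ : 𝕜, Module.End.eigenspace (A : H →ₗ[𝕜] H) μ).topologicalClosure = ⊤)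
    (p : ℝ → Prop) :
    ((⨆ μ ∈ {μ : ℝ | Module.End.HasEigenvalue (A : H →ₗ[𝕜] H) (μ:𝕜)} ∩ {μ | p μ},
        ES A μ).topologicalClosure)ᗮ
      = (⨆ μ ∈ {μ : ℝ | Module.End.HasEigenvalue (A : H →ₗ[𝕜] H) (μ:𝕜)} ∩ {μ | ¬ p μ},
        ES A μ).topologicalClosure := by
  set S : Set ℝ := {μ : ℝ | Module.End.HasEigenvalue (A : H →ₗ[𝕜] H) (μ:𝕜)} with hS
  set W0 : Submodule 𝕜 H := ⨆ μ ∈ S ∩ {μ | p μ}, ES A μ with hW0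
  set V0 : Submodule 𝕜 H := ⨆ μ ∈ S ∩ {μ | ¬ p μ}, ES A μ with hV0
  set W := W0.topologicalClosure with hW
  set V := V0.topologicalClosure with hV
  -- pairwise orthogonality of W0 and V0
  have hOrth : ∀ u ∈ W0, ∀ v ∈ V0, ⟪u, v⟫ = 0 := by
    intro u hu v hv
    obtain ⟨g, hg1, hg2, rfl⟩ := mem_iSup_decomp A _ hu
    obtain ⟨f, hf1, hf2, rfl⟩ := mem_iSup_decomp A _ hv
    rw [sum_inner]
    refine Finset.sum_eq_zero fun ν hν => ?_
    rw [inner_sum]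
    refine Finset.sum_eq_zero fun μ hμ => ?_
    have hne : ((ν:ℝ):𝕜) ≠ ((μ:ℝ):𝕜) := by
      simp only [ne_eq, RCLike.ofReal_inj]
      intro hh
      exact (hf2 μ hμ).2 (hh ▸ (hg2 ν hν).2)
    exact hA.orthogonalFamily_eigenspaces hne ⟨g ν, hg1 ν⟩ ⟨f μ, hf1 μ⟩
  have hVW : V ≤ Wᗮ := by
    rw [hW, _root_.orthogonal_closure]
    refine Submodule.topologicalClosure_minimal (s := V0) ?_ W0.isClosed_orthogonal
    intro v hv
    rw [Submodule.mem_orthogonal]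
    intro u hu
    exact hOrth u hu v hv
  refine le_antisymm ?_ hVW
  -- converse
  intro u hu
  haveI : CompleteSpace V := (Submodule.isClosed_topologicalClosure _).completeSpace_coe
  set d := u - (orthogonalProjection V u : H) with hd
  have hdV : d ∈ Vᗮ := Submodule.sub_starProjection_mem_orthogonal (K := V) u
  have hdW : d ∈ Wᗮ := by
    refine sub_mem hu (hVW ?_)
    exact SetLike.coe_mem (orthogonalProjection V u)
  have hd0 : d = 0 := by
    have hmem : d ∈ (⨆ μ : 𝕜, Module.End.eigenspace (A : H →ₗ[𝕜] H) μ)ᗮ := by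
      rw [Submodule.mem_orthogonal]
      intro w hw
      refine Submodule.iSup_induction' (p := fun μ : 𝕜 => Module.End.eigenspace (A : H →ₗ[𝕜] H) μ)
        (motive := fun w _ => ⟪w, d⟫ = 0) (mem := ?_) (zero := by simp) (add := ?_) (hx := hw)
      · intro μ x hx
        rcases eq_or_ne x 0 with rfl | hx0
        · simp
        · have hev : Module.End.HasEigenvalue (A : H →ₗ[𝕜] H) μ :=
            Module.End.hasEigenvalue_of_hasEigenvector ⟨hx, hx0⟩
          have hreal : ((RCLike.re μ : ℝ) : 𝕜) = μ :=
            RCLike.conj_eq_iff_re.mp (hA.conj_eigenvalue_eq_self hev)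
          set r : ℝ := RCLike.re μ with hr
          have hrS : r ∈ S := by rw [hS]; simp only [Set.mem_setOf_eq, hreal]; exact hev
          have hxES : x ∈ ES A r := by rw [ES]; rw [hreal]; exact hx
          by_cases hp : p r
          · have hxW : x ∈ W := Submodule.le_topologicalClosure _ (mem_iSup_ES (Set.mem_inter hrS hp) hxES)
            exact (Submodule.mem_orthogonal _ _).mp hdW x hxW
          · have hxV : x ∈ V := Submodule.le_topologicalClosure _ (mem_iSup_ES (Set.mem_inter hrS hp) hxES)
            exact (Submodule.mem_orthogonal _ _).mp hdV x hxV
      · intro x y _ _ h h'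
        rw [inner_add_left, h, h', add_zero]
    rw [← _root_.orthogonal_closure, hdense, Submodule.top_orthogonal_eq_bot] at hmem
    exact hmem
  have : u = (orthogonalProjection V u : H) := by
    have := sub_eq_zero.mp hd0
    exact this
  rw [this]
  exact SetLike.coe_mem (orthogonalProjection V u)

lemma key_plus [CompleteSpace H] {A : H →L[𝕜] H} (hA : (A : H →ₗ[𝕜] H).IsSymmetric)
    (hdense : (⨆ μ : 𝕜, Module.End.eigenspace (A : H →ₗ[𝕜] H) μ).topologicalClosure = ⊤)
    {τ : ℝ} (hτ : 0 < τ)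
    (hmax : ∀ D ⊆ {μ : ℝ | Module.End.HasEigenvalue (A : H →ₗ[𝕜] H) (μ : 𝕜)} ∩ Set.Ioi τ,
      D.Nonempty → ∃ m ∈ D, ∀ b ∈ D, b ≤ m)
    (hfd : ∀ μ ∈ {μ : ℝ | Module.End.HasEigenvalue (A : H →ₗ[𝕜] H) (μ : 𝕜)} ∩ Set.Ioi τ,
      FiniteDimensional 𝕜 (ES A μ))
    (T : H →ₗ[𝕜] H) (hTinj : Function.Injective T)
    (hAU : ∀ x y : H, ⟪T x, A (T y)⟫ = ⟪x, A y⟫)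
    (hcontr : ∀ x : H, ‖T x‖ ≤ ‖x‖) :
    ∀ μ ∈ {μ : ℝ | Module.End.HasEigenvalue (A : H →ₗ[𝕜] H) (μ : 𝕜)} ∩ Set.Ioi τ,
      (∀ z ∈ ES A μ, T z ∈ ES A μ ∧ ‖T z‖ = ‖z‖) ∧
      (∀ w ∈ ES A μ, ∃ z ∈ ES A μ, T z = w) := by
  set S := {μ : ℝ | Module.End.HasEigenvalue (A : H →ₗ[𝕜] H) (μ : 𝕜)} with hSdef
  have hwf : WellFounded (fun a b : ↥(S ∩ Set.Ioi τ) => (b : ℝ) < (a : ℝ)) := by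
    rw [WellFounded.wellFounded_iff_has_min]
    intro s hs
    obtain ⟨m, hmD, hm⟩ := hmax (Subtype.val '' s)
      (by rintro _ ⟨a, _, rfl⟩; exact a.2) (hs.image _)
    obtain ⟨a, ha, rfl⟩ := hmD
    exact ⟨a, ha, fun x hx => not_lt.mpr (hm x ⟨x, hx, rfl⟩)⟩
  suffices hmain : ∀ a : ↥(S ∩ Set.Ioi τ),
      (∀ z ∈ ES A (a : ℝ), T z ∈ ES A (a : ℝ) ∧ ‖T z‖ = ‖z‖) ∧
      (∀ w ∈ ES A (a : ℝ), ∃ z ∈ ES A (a : ℝ), T z = w) by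
    intro μ hμ; exact hmain ⟨μ, hμ⟩
  intro a
  refine hwf.induction (C := fun a : ↥(S ∩ Set.Ioi τ) =>
      (∀ z ∈ ES A (a : ℝ), T z ∈ ES A (a : ℝ) ∧ ‖T z‖ = ‖z‖) ∧
      (∀ w ∈ ES A (a : ℝ), ∃ z ∈ ES A (a : ℝ), T z = w)) a ?_
  rintro ⟨μ, hμS, hμτ⟩ IH
  simp only [Subtype.forall] at IH ⊢
  have hμ0 : (0:ℝ) < μ := lt_trans hτ hμτ
  have hpart := partition_orthogonal hA hdense (fun ν => μ < ν)
  set W0 : Submodule 𝕜 H := ⨆ ν ∈ S ∩ {ν : ℝ | μ < ν}, ES A ν with hW0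
  set V : Submodule 𝕜 H :=
    (⨆ ν ∈ S ∩ {ν : ℝ | ¬ μ < ν}, ES A ν).topologicalClosure with hV
  have hμV : ∀ ν ∈ S ∩ {ν : ℝ | ¬ μ < ν}, ν ≤ μ := fun ν hν => not_lt.mp hν.2
  have hstep1 : ∀ z ∈ ES A μ, T z ∈ ES A μ ∧ ‖T z‖ = ‖z‖ := by
    intro z hz
    have horth : T z ∈ W0.topologicalClosureᗮ := by
      rw [_root_.orthogonal_closure, Submodule.mem_orthogonal']
      intro w hw
      obtain ⟨g, hg1, hg2, rfl⟩ := mem_iSup_decomp A _ hw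
      rw [inner_sum]
      refine Finset.sum_eq_zero fun ν hν => ?_
      obtain ⟨hνS, hνμ⟩ := hg2 ν hν
      have hντ : ν ∈ Set.Ioi τ := Set.mem_Ioi.mpr (lt_trans hμτ hνμ)
      obtain ⟨hmaps, hsurj⟩ := IH ν ⟨hνS, hντ⟩ hνμ
      obtain ⟨z', hz', hzz'⟩ := hsurj (g ν) (hg1 ν)
      have hne : ((μ:ℝ):𝕜) ≠ ((ν:ℝ):𝕜) := by
        simp only [ne_eq, RCLike.ofReal_inj]; exact fun h => (lt_irrefl μ) (h ▸ hνμ)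
      have hzz'0 : ⟪z, z'⟫ = 0 :=
        hA.orthogonalFamily_eigenspaces hne ⟨z, hz⟩ ⟨z', hz'⟩
      have h1 : ⟪T z, A (T z')⟫ = ⟪z, A z'⟫ := hAU z z'
      rw [ES_apply hz', inner_smul_right, hzz'0, mul_zero] at h1
      rw [ES_apply (hmaps z' hz').1, inner_smul_right] at h1
      have hν0 : ((ν:ℝ):𝕜) ≠ 0 :=
        RCLike.ofReal_ne_zero.mpr (ne_of_gt (lt_trans hτ hντ))
      have h2 : ⟪T z, T z'⟫ = 0 := by
        rcases mul_eq_zero.mp h1 with h | h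
        · exact absurd h hν0
        · exact h
      rw [← hzz', h2]
    rw [hpart] at horth
    have hq : RCLike.re ⟪T z, A (T z)⟫ = μ * ‖z‖ ^ 2 := by
      rw [hAU z z, ES_apply hz, inner_smul_right, RCLike.re_ofReal_mul,
        inner_self_eq_norm_sq]
    have hbound : RCLike.re ⟪T z, A (T z)⟫ ≤ μ * ‖T z‖ ^ 2 :=
      q_le_on_closure hA hμV horth
    have h3 : ‖T z‖ = ‖z‖ := by
      refine le_antisymm (hcontr z) ?_
      have h4 : ‖z‖ ^ 2 ≤ ‖T z‖ ^ 2 := by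
        have := hq ▸ hbound
        nlinarith
      nlinarith [norm_nonneg z, norm_nonneg (T z)]
    set Bop : H →L[𝕜] H := ((μ:ℝ):𝕜) • (1 : H →L[𝕜] H) - A with hBop
    have hBapp : ∀ x : H, Bop x = ((μ:ℝ):𝕜) • x - A x := fun x => rfl
    have hBsym : ∀ x y : H, ⟪Bop x, y⟫ = ⟪x, Bop y⟫ := by
      intro x y
      rw [hBapp, hBapp, inner_sub_left, inner_sub_right, inner_smul_left,
        inner_smul_right, RCLike.conj_ofReal,
        show (⟪A x, y⟫ : 𝕜) = ⟪x, A y⟫ from hA x y]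
    have hBV : ∀ v ∈ V, Bop v ∈ V := by
      intro v hv
      rw [hBapp]
      exact sub_mem (Submodule.smul_mem _ _ hv) (closure_iSup_ES_invariant _ v hv)
    have hBpsd : ∀ v ∈ V, 0 ≤ RCLike.re ⟪v, Bop v⟫ := by
      intro v hv
      have hb := q_le_on_closure hA hμV hv
      rw [hBapp, inner_sub_right, inner_smul_right, map_sub, RCLike.re_ofReal_mul,
        inner_self_eq_norm_sq]
      linarith
    have hB0 : Bop (T z) = 0 := by
      refine psd_inner_zero hBsym V hBpsd horth (hBV _ horth) ?_
      rw [hBapp, inner_sub_right, inner_smul_right, map_sub, RCLike.re_ofReal_mul,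
        inner_self_eq_norm_sq, hq, h3]
      ring
    have hmemES : T z ∈ ES A μ := by
      rw [mem_ES]
      have := hB0
      rw [hBapp] at this
      have := sub_eq_zero.mp this
      exact this.symm
    exact ⟨hmemES, h3⟩
  refine ⟨hstep1, ?_⟩
  haveI hfdμ : FiniteDimensional 𝕜 (ES A μ) := hfd μ ⟨hμS, hμτ⟩
  set Tr : ES A μ →ₗ[𝕜] ES A μ := T.restrict (fun x hx => (hstep1 x hx).1) with hTr
  have hTrinj : Function.Injective Tr := by
    intro x y hxy
    have : T (x : H) = T (y : H) := congrArg Subtype.val hxy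
    exact Subtype.ext (hTinj this)
  have hTrsurj : Function.Surjective Tr :=
    (LinearMap.injective_iff_surjective).mp hTrinj
  intro w hw
  obtain ⟨z, hzeq⟩ := hTrsurj ⟨w, hw⟩
  exact ⟨z, z.2, congrArg Subtype.val hzeq⟩

lemma key_minus [CompleteSpace H] {A : H →L[𝕜] H} (hA : (A : H →ₗ[𝕜] H).IsSymmetric)
    (hdense : (⨆ μ : 𝕜, Module.End.eigenspace (A : H →ₗ[𝕜] H) μ).topologicalClosure = ⊤)
    {τ : ℝ} (hτ : 0 < τ)
    (hSpos : ∀ ν ∈ {μ : ℝ | Module.End.HasEigenvalue (A : H →ₗ[𝕜] H) (μ : 𝕜)}, 0 < ν)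
    (hmin : ∀ D ⊆ {μ : ℝ | Module.End.HasEigenvalue (A : H →ₗ[𝕜] H) (μ : 𝕜)} ∩ Set.Ioo 0 τ,
      D.Nonempty → ∃ m ∈ D, ∀ b ∈ D, m ≤ b)
    (hfd : ∀ μ ∈ {μ : ℝ | Module.End.HasEigenvalue (A : H →ₗ[𝕜] H) (μ : 𝕜)} ∩ Set.Ioo 0 τ,
      FiniteDimensional 𝕜 (ES A μ))
    (T Tinv : H →ₗ[𝕜] H)
    (hTinv1 : ∀ x : H, T (Tinv x) = x) (hTinv2 : ∀ x : H, Tinv (T x) = x)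
    (hAU : ∀ x y : H, ⟪T x, A (T y)⟫ = ⟪x, A y⟫)
    (hcontr : ∀ x : H, ‖T x‖ ≤ ‖x‖) :
    ∀ μ ∈ {μ : ℝ | Module.End.HasEigenvalue (A : H →ₗ[𝕜] H) (μ : 𝕜)} ∩ Set.Ioo 0 τ,
      (∀ z ∈ ES A μ, T z ∈ ES A μ ∧ ‖T z‖ = ‖z‖) ∧
      (∀ w ∈ ES A μ, ∃ z ∈ ES A μ, T z = w) := by
  set S := {μ : ℝ | Module.End.HasEigenvalue (A : H →ₗ[𝕜] H) (μ : 𝕜)} with hSdef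
  have hwf : WellFounded (fun a b : ↥(S ∩ Set.Ioo 0 τ) => (a : ℝ) < (b : ℝ)) := by
    rw [WellFounded.wellFounded_iff_has_min]
    intro s hs
    obtain ⟨m, hmD, hm⟩ := hmin (Subtype.val '' s)
      (by rintro _ ⟨a, _, rfl⟩; exact a.2) (hs.image _)
    obtain ⟨a, ha, rfl⟩ := hmD
    exact ⟨a, ha, fun x hx => not_lt.mpr (hm x ⟨x, hx, rfl⟩)⟩
  suffices hmain : ∀ a : ↥(S ∩ Set.Ioo 0 τ),
      (∀ z ∈ ES A (a : ℝ), T z ∈ ES A (a : ℝ) ∧ ‖T z‖ = ‖z‖) ∧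
      (∀ w ∈ ES A (a : ℝ), ∃ z ∈ ES A (a : ℝ), T z = w) by
    intro μ hμ; exact hmain ⟨μ, hμ⟩
  intro a
  refine hwf.induction (C := fun a : ↥(S ∩ Set.Ioo 0 τ) =>
      (∀ z ∈ ES A (a : ℝ), T z ∈ ES A (a : ℝ) ∧ ‖T z‖ = ‖z‖) ∧
      (∀ w ∈ ES A (a : ℝ), ∃ z ∈ ES A (a : ℝ), T z = w)) a ?_
  rintro ⟨μ, hμS, hμI⟩ IH
  simp only [Subtype.forall] at IH ⊢
  obtain ⟨hμ0, hμτ⟩ := hμI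
  have hpart := partition_orthogonal hA hdense (fun ν => ν < μ)
  set W0 : Submodule 𝕜 H := ⨆ ν ∈ S ∩ {ν : ℝ | ν < μ}, ES A ν with hW0
  set V : Submodule 𝕜 H :=
    (⨆ ν ∈ S ∩ {ν : ℝ | ¬ ν < μ}, ES A ν).topologicalClosure with hV
  have hμV : ∀ ν ∈ S ∩ {ν : ℝ | ¬ ν < μ}, μ ≤ ν := fun ν hν => not_lt.mp hν.2
  -- Tinv maps the eigenspace into itself, isometrically
  have hstep1 : ∀ z ∈ ES A μ, Tinv z ∈ ES A μ ∧ ‖Tinv z‖ = ‖z‖ := by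
    intro z hz
    have horth : Tinv z ∈ W0.topologicalClosureᗮ := by
      rw [_root_.orthogonal_closure, Submodule.mem_orthogonal']
      intro w hw
      obtain ⟨g, hg1, hg2, rfl⟩ := mem_iSup_decomp A _ hw
      rw [inner_sum]
      refine Finset.sum_eq_zero fun ν hν => ?_
      obtain ⟨hνS, hνμ⟩ := hg2 ν hν
      have hνI : ν ∈ Set.Ioo 0 τ := ⟨hSpos ν hνS, lt_trans hνμ hμτ⟩
      obtain ⟨hmaps, hsurj⟩ := IH ν ⟨hνS, hνI⟩ hνμ
      have hne : ((μ:ℝ):𝕜) ≠ ((ν:ℝ):𝕜) := by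
        simp only [ne_eq, RCLike.ofReal_inj]; exact fun h => (lt_irrefl μ) (h ▸ hνμ)
      have hTg : T (g ν) ∈ ES A ν := (hmaps (g ν) (hg1 ν)).1
      have hzTg : ⟪z, T (g ν)⟫ = 0 :=
        hA.orthogonalFamily_eigenspaces hne ⟨z, hz⟩ ⟨T (g ν), hTg⟩
      have h1 : ⟪T (Tinv z), A (T (g ν))⟫ = ⟪Tinv z, A (g ν)⟫ := hAU (Tinv z) (g ν)
      rw [hTinv1 z, ES_apply hTg, inner_smul_right, hzTg, mul_zero] at h1
      rw [ES_apply (hg1 ν), inner_smul_right] at h1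
      have hν0 : ((ν:ℝ):𝕜) ≠ 0 := RCLike.ofReal_ne_zero.mpr (ne_of_gt (hSpos ν hνS))
      have h2 : ⟪Tinv z, g ν⟫ = 0 := by
        rcases mul_eq_zero.mp h1.symm with h | h
        · exact absurd h hν0
        · exact h
      exact h2
    rw [hpart] at horth
    have hq : RCLike.re ⟪Tinv z, A (Tinv z)⟫ = μ * ‖z‖ ^ 2 := by
      rw [← hAU (Tinv z) (Tinv z), hTinv1 z, ES_apply hz, inner_smul_right,
        RCLike.re_ofReal_mul, inner_self_eq_norm_sq]
    have hbound : μ * ‖Tinv z‖ ^ 2 ≤ RCLike.re ⟪Tinv z, A (Tinv z)⟫ :=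
      q_ge_on_closure hA hμV horth
    have hzn : ‖z‖ ≤ ‖Tinv z‖ := by
      have := hcontr (Tinv z)
      rwa [hTinv1 z] at this
    have h3 : ‖Tinv z‖ = ‖z‖ := by
      refine le_antisymm ?_ hzn
      have h4 : ‖Tinv z‖ ^ 2 ≤ ‖z‖ ^ 2 := by nlinarith
      nlinarith [norm_nonneg z, norm_nonneg (Tinv z)]
    set Bop : H →L[𝕜] H := A - ((μ:ℝ):𝕜) • (1 : H →L[𝕜] H) with hBop
    have hBapp : ∀ x : H, Bop x = A x - ((μ:ℝ):𝕜) • x := fun x => rfl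
    have hBsym : ∀ x y : H, ⟪Bop x, y⟫ = ⟪x, Bop y⟫ := by
      intro x y
      rw [hBapp, hBapp, inner_sub_left, inner_sub_right, inner_smul_left,
        inner_smul_right, RCLike.conj_ofReal,
        show (⟪A x, y⟫ : 𝕜) = ⟪x, A y⟫ from hA x y]
    have hBV : ∀ v ∈ V, Bop v ∈ V := by
      intro v hv
      rw [hBapp]
      exact sub_mem (closure_iSup_ES_invariant _ v hv) (Submodule.smul_mem _ _ hv)
    have hBpsd : ∀ v ∈ V, 0 ≤ RCLike.re ⟪v, Bop v⟫ := by
      intro v hv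
      have hb := q_ge_on_closure hA hμV hv
      rw [hBapp, inner_sub_right, inner_smul_right, map_sub, RCLike.re_ofReal_mul,
        inner_self_eq_norm_sq]
      linarith
    have hB0 : Bop (Tinv z) = 0 := by
      refine psd_inner_zero hBsym V hBpsd horth (hBV _ horth) ?_
      rw [hBapp, inner_sub_right, inner_smul_right, map_sub, RCLike.re_ofReal_mul,
        inner_self_eq_norm_sq, hq, h3]
      ring
    have hmemES : Tinv z ∈ ES A μ := by
      rw [mem_ES]
      rw [hBapp] at hB0
      have := sub_eq_zero.mp hB0
      simpa using this
    exact ⟨hmemES, h3⟩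
  -- now transfer to T using finite dimensionality
  haveI hfdμ : FiniteDimensional 𝕜 (ES A μ) := hfd μ ⟨hμS, hμ0, hμτ⟩
  have hTinvinj : Function.Injective Tinv := by
    intro x y hxy
    have := congrArg T hxy
    rwa [hTinv1, hTinv1] at this
  set Tr : ES A μ →ₗ[𝕜] ES A μ := Tinv.restrict (fun x hx => (hstep1 x hx).1) with hTr
  have hTrinj : Function.Injective Tr := by
    intro x y hxy
    exact Subtype.ext (hTinvinj (congrArg Subtype.val hxy))
  have hTrsurj : Function.Surjective Tr :=
    (LinearMap.injective_iff_surjective).mp hTrinj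
  constructor
  · intro z hz
    obtain ⟨w, hweq⟩ := hTrsurj ⟨z, hz⟩
    have hweq' : Tinv (w : H) = z := congrArg Subtype.val hweq
    have hTz : T z = (w : H) := by rw [← hweq', hTinv1]
    have hn : ‖Tinv (w : H)‖ = ‖(w : H)‖ := (hstep1 _ w.2).2
    rw [hweq'] at hn
    exact ⟨hTz ▸ w.2, by rw [hTz, ← hn]⟩
  · intro w hw
    refine ⟨Tinv w, (hstep1 w hw).1, hTinv1 w⟩

lemma real_sq_eq {a b : ℝ} (ha : 0 ≤ a) (hb : 0 ≤ b) (h : a ^ 2 = b ^ 2) : a = b := by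
  rw [← Real.sqrt_sq ha, ← Real.sqrt_sq hb, h]

lemma assembly [CompleteSpace H] {A : H →L[𝕜] H} (hA : (A : H →ₗ[𝕜] H).IsSymmetric)
    (Aset : Set ℝ) (T : H →ₗ[𝕜] H) (hTinj : Function.Injective T)
    (hcontr : ∀ x : H, ‖T x‖ ≤ ‖x‖)
    (hkey : ∀ μ ∈ Aset, (∀ z ∈ ES A μ, T z ∈ ES A μ ∧ ‖T z‖ = ‖z‖) ∧
      (∀ w ∈ ES A μ, ∃ z ∈ ES A μ, T z = w)) :
    T '' ((⨆ μ ∈ Aset, ES A μ).topologicalClosure : Set H)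
      = ((⨆ μ ∈ Aset, ES A μ).topologicalClosure : Set H) ∧
    Set.BijOn T ((⨆ μ ∈ Aset, ES A μ).topologicalClosure : Set H)
      ((⨆ μ ∈ Aset, ES A μ).topologicalClosure : Set H) ∧
    ∀ x ∈ ((⨆ μ ∈ Aset, ES A μ).topologicalClosure : Set H),
      ∀ y ∈ ((⨆ μ ∈ Aset, ES A μ).topologicalClosure : Set H), ‖T x - T y‖ = ‖x - y‖ := by
  have hTcont : Continuous T := AddMonoidHomClass.continuous_of_bound T 1 (fun x => by simpa using hcontr x)
  set M0 : Submodule 𝕜 H := ⨆ μ ∈ Aset, ES A μ with hM0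
  set Hs := M0.topologicalClosure with hHs
  -- T preserves M0 with norms
  have hM0maps : ∀ x ∈ M0, T x ∈ M0 ∧ ‖T x‖ = ‖x‖ := by
    intro x hx
    obtain ⟨g, hg1, hg2, rfl⟩ := mem_iSup_decomp A _ hx
    have hTg : ∀ μ ∈ g.support, T (g μ) ∈ ES A μ :=
      fun μ hμ => ((hkey μ (hg2 μ hμ)).1 (g μ) (hg1 μ)).1
    have hTgn : ∀ μ ∈ g.support, ‖T (g μ)‖ = ‖g μ‖ :=
      fun μ hμ => ((hkey μ (hg2 μ hμ)).1 (g μ) (hg1 μ)).2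
    have hmapsum : T (∑ μ ∈ g.support, g μ) = ∑ μ ∈ g.support, T (g μ) := map_sum T _ _
    constructor
    · rw [hmapsum]
      exact Submodule.sum_mem _ fun μ hμ => mem_iSup_ES (hg2 μ hμ) (hTg μ hμ)
    · have h1 : ‖∑ μ ∈ g.support, T (g μ)‖ ^ 2 = ∑ μ ∈ g.support, ‖T (g μ)‖ ^ 2 :=
        norm_sq_sum_eigen hA _ _ hTg
      have h2 : ‖∑ μ ∈ g.support, g μ‖ ^ 2 = ∑ μ ∈ g.support, ‖g μ‖ ^ 2 :=
        norm_sq_sum_eigen hA _ _ (fun μ _ => hg1 μ)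
      rw [hmapsum]
      refine real_sq_eq (norm_nonneg _) (norm_nonneg _) ?_
      rw [h1, h2]
      exact Finset.sum_congr rfl fun μ hμ => by rw [hTgn μ hμ]
  -- isometry on the closure
  have hisom : ∀ x ∈ Hs, ‖T x‖ = ‖x‖ := by
    have hcl : IsClosed {x : H | ‖T x‖ = ‖x‖} := isClosed_eq hTcont.norm continuous_norm
    intro x hx
    exact closure_minimal (fun y hy => (hM0maps y hy).2) hcl hx
  -- image inside
  have hmapsTo : ∀ x ∈ Hs, T x ∈ Hs := by
    intro x hx
    have h1 : T '' closure (M0 : Set H) ⊆ closure (T '' (M0 : Set H)) :=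
      image_closure_subset_closure_image hTcont
    have h2 : closure (T '' (M0 : Set H)) ⊆ closure (M0 : Set H) :=
      closure_mono (by rintro _ ⟨y, hy, rfl⟩; exact (hM0maps y hy).1)
    exact h2 (h1 ⟨x, hx, rfl⟩)
  -- closedness of the image
  have hclosedim : IsClosed (T '' (Hs : Set H)) := by
    refine IsSeqClosed.isClosed ?_
    intro xs u hxs hlim
    choose z hz1 hz2 using hxs
    have hc1 : CauchySeq xs := hlim.cauchySeq
    have hdist : ∀ n m : ℕ, dist (z n) (z m) = dist (xs n) (xs m) := by
      intro n m
      rw [dist_eq_norm, dist_eq_norm, ← hz2 n, ← hz2 m, ← map_sub]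
      exact (hisom _ (sub_mem (hz1 n) (hz1 m))).symm
    have hc2 : CauchySeq z := by
      rw [Metric.cauchySeq_iff] at hc1 ⊢
      intro ε hε
      obtain ⟨N, hN⟩ := hc1 ε hε
      exact ⟨N, fun m hm n hn => by rw [hdist]; exact hN m hm n hn⟩
    obtain ⟨l, hl⟩ := cauchySeq_tendsto_of_complete hc2
    have hlHs : l ∈ Hs := by
      have hcl : IsClosed (Hs : Set H) := Submodule.isClosed_topologicalClosure _
      exact hcl.mem_of_tendsto hl (Filter.Eventually.of_forall hz1)
    have hTl : Filter.Tendsto xs Filter.atTop (nhds (T l)) := by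
      have := (hTcont.tendsto l).comp hl
      simpa only [Function.comp_def, hz2] using this
    exact ⟨l, hlHs, (tendsto_nhds_unique hlim hTl).symm⟩
  -- surjectivity
  have hsurj : (Hs : Set H) ⊆ T '' (Hs : Set H) := by
    have hsub : (M0 : Set H) ⊆ T '' (Hs : Set H) := by
      intro w hw
      obtain ⟨g, hg1, hg2, rfl⟩ := mem_iSup_decomp A _ hw
      have hex : ∀ μ ∈ g.support, ∃ z ∈ ES A μ, T z = g μ :=
        fun μ hμ => (hkey μ (hg2 μ hμ)).2 (g μ) (hg1 μ)
      choose zf hzf1 hzf2 using hex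
      refine ⟨∑ μ ∈ g.support.attach, zf μ.1 μ.2, ?_, ?_⟩
      · refine Submodule.le_topologicalClosure _ ?_
        exact Submodule.sum_mem _ fun μ _ => mem_iSup_ES (hg2 μ.1 μ.2) (hzf1 μ.1 μ.2)
      · rw [map_sum]
        rw [← Finset.sum_attach g.support (fun μ => g μ)]
        exact Finset.sum_congr rfl fun μ _ => hzf2 μ.1 μ.2
    calc (Hs : Set H) = closure (M0 : Set H) := rfl
      _ ⊆ T '' (Hs : Set H) := closure_minimal hsub hclosedim
  have himeq : T '' (Hs : Set H) = (Hs : Set H) :=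
    Set.Subset.antisymm (by rintro _ ⟨x, hx, rfl⟩; exact hmapsTo x hx) hsurj
  refine ⟨himeq, ⟨fun x hx => hmapsTo x hx, fun x _ y _ h => hTinj h, ?_⟩, ?_⟩
  · intro w hw
    exact hsurj hw
  · intro x hx y hy
    rw [← map_sub]
    exact hisom _ (sub_mem hx hy)

end Aux



/-- **Claim 2.** Let `A` be a bounded self-adjoint operator (positively
bounded below on the sphere) on a separable infinite-dimensional Hilbert space `H`, whose
eigenvectors span a dense subspace of `H`. Let `τ > 0` be such that every nonempty subset
of `A⁺ = σ_p(A) ∩ (τ, ∞)` has a maximal element, every nonempty subset of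
`A⁻ = σ_p(A) ∩ (0, τ)` has a minimal element, and every eigenvalue in `A⁺ ∪ A⁻` has
finite-dimensional eigenspace. Let `H⁺` (resp. `H⁻`) be the closed linear span of the
eigenvectors with eigenvalue in `A⁺` (resp. `A⁻`). If a linear operator `T` maps the
ellipsoid `E = {x | ⟨x, Ax⟩ ≤ 1}` bijectively onto itself and is non-expansive on `E`,
then `T(H⁻) = H⁻`, `T(H⁺) = H⁺`, and the restrictions of `T` to `H⁻` and `H⁺` are
bijective isometries. -/
theorem closedEigenSpans_invariant
    {𝕜 H : Type*} [RCLike 𝕜] [NormedAddCommGroup H] [InnerProductSpace 𝕜 H]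
    [CompleteSpace H] [TopologicalSpace.SeparableSpace H]
    (hinf : ¬ FiniteDimensional 𝕜 H)
    (A : H →L[𝕜] H) (hA : IsSelfAdjoint A)
    (hpos : ∃ c : ℝ, 0 < c ∧ ∀ x : H, ‖x‖ = 1 → c ≤ RCLike.re (inner 𝕜 (A x) x : 𝕜))
    (hdense : (⨆ μ : 𝕜, Module.End.eigenspace (A : H →ₗ[𝕜] H) μ).topologicalClosure = ⊤)
    (τ : ℝ) (hτ : 0 < τ)
    (hmax : ∀ D ⊆ {μ : ℝ | Module.End.HasEigenvalue (A : H →ₗ[𝕜] H) (μ : 𝕜)} ∩ Set.Ioi τ,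
      D.Nonempty → ∃ m ∈ D, ∀ b ∈ D, b ≤ m)
    (hmin : ∀ D ⊆ {μ : ℝ | Module.End.HasEigenvalue (A : H →ₗ[𝕜] H) (μ : 𝕜)} ∩ Set.Ioo 0 τ,
      D.Nonempty → ∃ m ∈ D, ∀ b ∈ D, m ≤ b)
    (hfd : ∀ μ ∈ {μ : ℝ | Module.End.HasEigenvalue (A : H →ₗ[𝕜] H) (μ : 𝕜)}
        ∩ (Set.Ioi τ ∪ Set.Ioo 0 τ),
      FiniteDimensional 𝕜 (Module.End.eigenspace (A : H →ₗ[𝕜] H) (μ : 𝕜)))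
    (T : H →ₗ[𝕜] H)
    (hTbij : Set.BijOn T {x : H | RCLike.re (inner 𝕜 x (A x) : 𝕜) ≤ 1}
      {x : H | RCLike.re (inner 𝕜 x (A x) : 𝕜) ≤ 1})
    (hTne : ∀ x ∈ {x : H | RCLike.re (inner 𝕜 x (A x) : 𝕜) ≤ 1},
      ∀ y ∈ {x : H | RCLike.re (inner 𝕜 x (A x) : 𝕜) ≤ 1}, ‖T x - T y‖ ≤ ‖x - y‖) :
    T '' (closedEigenSpan A
        ({μ : ℝ | Module.End.HasEigenvalue (A : H →ₗ[𝕜] H) (μ : 𝕜)} ∩ Set.Ioo 0 τ) : Set H)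
      = (closedEigenSpan A
        ({μ : ℝ | Module.End.HasEigenvalue (A : H →ₗ[𝕜] H) (μ : 𝕜)} ∩ Set.Ioo 0 τ) : Set H) ∧
    T '' (closedEigenSpan A
        ({μ : ℝ | Module.End.HasEigenvalue (A : H →ₗ[𝕜] H) (μ : 𝕜)} ∩ Set.Ioi τ) : Set H)
      = (closedEigenSpan A
        ({μ : ℝ | Module.End.HasEigenvalue (A : H →ₗ[𝕜] H) (μ : 𝕜)} ∩ Set.Ioi τ) : Set H) ∧
    (Set.BijOn T (closedEigenSpan A
        ({μ : ℝ | Module.End.HasEigenvalue (A : H →ₗ[𝕜] H) (μ : 𝕜)} ∩ Set.Ioo 0 τ) : Set H)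
      (closedEigenSpan A
        ({μ : ℝ | Module.End.HasEigenvalue (A : H →ₗ[𝕜] H) (μ : 𝕜)} ∩ Set.Ioo 0 τ) : Set H) ∧
     ∀ x ∈ (closedEigenSpan A
        ({μ : ℝ | Module.End.HasEigenvalue (A : H →ₗ[𝕜] H) (μ : 𝕜)} ∩ Set.Ioo 0 τ) : Set H),
       ∀ y ∈ (closedEigenSpan A
        ({μ : ℝ | Module.End.HasEigenvalue (A : H →ₗ[𝕜] H) (μ : 𝕜)} ∩ Set.Ioo 0 τ) : Set H),
         ‖T x - T y‖ = ‖x - y‖) ∧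
    (Set.BijOn T (closedEigenSpan A
        ({μ : ℝ | Module.End.HasEigenvalue (A : H →ₗ[𝕜] H) (μ : 𝕜)} ∩ Set.Ioi τ) : Set H)
      (closedEigenSpan A
        ({μ : ℝ | Module.End.HasEigenvalue (A : H →ₗ[𝕜] H) (μ : 𝕜)} ∩ Set.Ioi τ) : Set H) ∧
     ∀ x ∈ (closedEigenSpan A
        ({μ : ℝ | Module.End.HasEigenvalue (A : H →ₗ[𝕜] H) (μ : 𝕜)} ∩ Set.Ioi τ) : Set H),
       ∀ y ∈ (closedEigenSpan A
        ({μ : ℝ | Module.End.HasEigenvalue (A : H →ₗ[𝕜] H) (μ : 𝕜)} ∩ Set.Ioi τ) : Set H),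
         ‖T x - T y‖ = ‖x - y‖) := by
  classical
  obtain ⟨c, hc0, hcball⟩ := hpos
  have hAsym : (A : H →ₗ[𝕜] H).IsSymmetric := hA.isSymmetric
  have hA' : ∀ x y : H, (inner 𝕜 (A x) y : 𝕜) = inner 𝕜 x (A y) := fun x y => hAsym x y
  set S := {μ : ℝ | Module.End.HasEigenvalue (A : H →ₗ[𝕜] H) (μ : 𝕜)} with hSdef
  set Eset := {x : H | RCLike.re (inner 𝕜 x (A x) : 𝕜) ≤ 1} with hEset
  -- coercivity
  have hcoer : ∀ x : H, c * ‖x‖ ^ 2 ≤ RCLike.re (inner 𝕜 x (A x) : 𝕜) := by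
    intro x
    rcases eq_or_ne x 0 with rfl | hx0
    · simp
    · have hn : (0:ℝ) < ‖x‖ := norm_pos_iff.mpr hx0
      set u : H := ((‖x‖⁻¹ : ℝ) : 𝕜) • x with hu
      have hun : ‖u‖ = 1 := by
        rw [hu, norm_smul, RCLike.norm_ofReal, abs_of_pos (inv_pos.mpr hn),
          inv_mul_cancel₀ (ne_of_gt hn)]
      have h1 := hcball u hun
      have h2 : (inner 𝕜 (A u) u : 𝕜)
          = ((‖x‖⁻¹ * ‖x‖⁻¹ : ℝ) : 𝕜) * inner 𝕜 (A x) x := by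
        rw [hu, map_smul, inner_smul_left, inner_smul_right, RCLike.conj_ofReal]
        push_cast
        ring
      rw [h2, RCLike.re_ofReal_mul] at h1
      have h3 : RCLike.re (inner 𝕜 (A x) x : 𝕜) = RCLike.re (inner 𝕜 x (A x) : 𝕜) := by
        rw [hA' x x]
      rw [h3] at h1
      have h4 : c * ‖x‖ ^ 2 ≤ (‖x‖⁻¹ * ‖x‖⁻¹) * RCLike.re (inner 𝕜 x (A x) : 𝕜) * ‖x‖ ^ 2 :=
        mul_le_mul_of_nonneg_right h1 (by positivity)
      have hxx : ‖x‖⁻¹ * ‖x‖ = 1 := inv_mul_cancel₀ (ne_of_gt hn)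
      calc c * ‖x‖ ^ 2 ≤ (‖x‖⁻¹ * ‖x‖⁻¹) * RCLike.re (inner 𝕜 x (A x) : 𝕜) * ‖x‖ ^ 2 := h4
        _ = RCLike.re (inner 𝕜 x (A x) : 𝕜) * ((‖x‖⁻¹ * ‖x‖) * (‖x‖⁻¹ * ‖x‖)) := by ring
        _ = RCLike.re (inner 𝕜 x (A x) : 𝕜) := by rw [hxx]; ring
  -- quadratic scaling
  have hqs : ∀ (t : ℝ) (x : H),
      RCLike.re (inner 𝕜 (((t:ℝ):𝕜) • x) (A (((t:ℝ):𝕜) • x)) : 𝕜)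
        = t ^ 2 * RCLike.re (inner 𝕜 x (A x) : 𝕜) := by
    intro t x
    rw [map_smul, inner_smul_left, inner_smul_right, RCLike.conj_ofReal, ← mul_assoc]
    rw [show ((t:ℝ):𝕜) * ((t:ℝ):𝕜) = (((t^2 : ℝ)):𝕜) by push_cast; ring]
    rw [RCLike.re_ofReal_mul]
  have h0E : (0 : H) ∈ Eset := by simp [hEset]
  have hqpos : ∀ x : H, x ≠ 0 → 0 < RCLike.re (inner 𝕜 x (A x) : 𝕜) := by
    intro x hx0
    have h1 := hcoer x
    have hn : (0:ℝ) < ‖x‖ := norm_pos_iff.mpr hx0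
    nlinarith [mul_pos hc0 (pow_pos hn 2)]
  have hscale : ∀ x : H, x ≠ 0 →
      (((Real.sqrt (RCLike.re (inner 𝕜 x (A x) : 𝕜)))⁻¹ : ℝ) : 𝕜) • x ∈ Eset := by
    intro x hx0
    have hqx := hqpos x hx0
    rw [hEset, Set.mem_setOf_eq, hqs, inv_pow, Real.sq_sqrt hqx.le,
      inv_mul_cancel₀ (ne_of_gt hqx)]
  -- injectivity
  have hT0 : ∀ d : H, T d = 0 → d = 0 := by
    intro d hd
    by_contra hd0
    have hq := hqpos d hd0
    have hrpos : (0:ℝ) < (Real.sqrt (RCLike.re (inner 𝕜 d (A d) : 𝕜)))⁻¹ := by positivity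
    have hmem := hscale d hd0
    have hTrd : T ((((Real.sqrt (RCLike.re (inner 𝕜 d (A d) : 𝕜)))⁻¹ : ℝ) : 𝕜) • d) = T 0 := by
      rw [map_smul, hd, smul_zero, map_zero]
    have heq := hTbij.injOn hmem h0E hTrd
    have hrne : ((((Real.sqrt (RCLike.re (inner 𝕜 d (A d) : 𝕜)))⁻¹ : ℝ)) : 𝕜) ≠ 0 :=
      RCLike.ofReal_ne_zero.mpr (ne_of_gt hrpos)
    rcases smul_eq_zero.mp heq with h | h
    · exact hrne h
    · exact hd0 h
  have hTinj : Function.Injective T := by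
    intro x y hxy
    have h1 : T (x - y) = 0 := by rw [map_sub, hxy, sub_self]
    exact sub_eq_zero.mp (hT0 _ h1)
  -- quadratic form preservation
  have hqpres : ∀ x : H,
      RCLike.re (inner 𝕜 (T x) (A (T x)) : 𝕜) = RCLike.re (inner 𝕜 x (A x) : 𝕜) := by
    intro x
    rcases eq_or_ne x 0 with rfl | hx0
    · simp
    · have hqx := hqpos x hx0
      have hTx0 : T x ≠ 0 := fun h => hx0 (hT0 x h)
      have hqT := hqpos (T x) hTx0
      have hle : RCLike.re (inner 𝕜 (T x) (A (T x)) : 𝕜) ≤ RCLike.re (inner 𝕜 x (A x) : 𝕜) := by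
        have hTm := hTbij.mapsTo (hscale x hx0)
        rw [hEset, Set.mem_setOf_eq, map_smul] at hTm
        rw [hqs, inv_pow, Real.sq_sqrt hqx.le] at hTm
        have h5 : RCLike.re (inner 𝕜 x (A x) : 𝕜) *
            ((RCLike.re (inner 𝕜 x (A x) : 𝕜))⁻¹ * RCLike.re (inner 𝕜 (T x) (A (T x)) : 𝕜))
            ≤ RCLike.re (inner 𝕜 x (A x) : 𝕜) * 1 :=
          mul_le_mul_of_nonneg_left hTm hqx.le
        rwa [mul_one, ← mul_assoc, mul_inv_cancel₀ (ne_of_gt hqx), one_mul] at h5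
      have hge : RCLike.re (inner 𝕜 x (A x) : 𝕜) ≤ RCLike.re (inner 𝕜 (T x) (A (T x)) : 𝕜) := by
        obtain ⟨z, hzE, hzeq⟩ := hTbij.surjOn (hscale (T x) hTx0)
        have hzx : z = (((Real.sqrt (RCLike.re (inner 𝕜 (T x) (A (T x)) : 𝕜)))⁻¹ : ℝ) : 𝕜) • x := by
          apply hTinj
          rw [hzeq, map_smul]
        rw [hzx, hEset, Set.mem_setOf_eq, hqs, inv_pow, Real.sq_sqrt hqT.le] at hzE
        have h5 : RCLike.re (inner 𝕜 (T x) (A (T x)) : 𝕜) *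
            ((RCLike.re (inner 𝕜 (T x) (A (T x)) : 𝕜))⁻¹ * RCLike.re (inner 𝕜 x (A x) : 𝕜))
            ≤ RCLike.re (inner 𝕜 (T x) (A (T x)) : 𝕜) * 1 :=
          mul_le_mul_of_nonneg_left hzE hqT.le
        rwa [mul_one, ← mul_assoc, mul_inv_cancel₀ (ne_of_gt hqT), one_mul] at h5
      linarith
  -- non-expansiveness globally
  have hcontr : ∀ x : H, ‖T x‖ ≤ ‖x‖ := by
    intro x
    rcases eq_or_ne x 0 with rfl | hx0
    · simp
    · have hqx := hqpos x hx0
      have hrpos : (0:ℝ) < (Real.sqrt (RCLike.re (inner 𝕜 x (A x) : 𝕜)))⁻¹ := by positivity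
      have hne := hTne _ (hscale x hx0) 0 h0E
      rw [map_zero, sub_zero, sub_zero, map_smul, norm_smul, norm_smul] at hne
      have hrn : (0:ℝ) < ‖((((Real.sqrt (RCLike.re (inner 𝕜 x (A x) : 𝕜)))⁻¹ : ℝ)) : 𝕜)‖ := by
        rw [RCLike.norm_ofReal]
        exact abs_pos.mpr (ne_of_gt hrpos)
      exact le_of_mul_le_mul_left hne hrn
  -- polarization: full A-unitarity
  have hexp : ∀ x y : H, RCLike.re (inner 𝕜 (x + y) (A (x + y)) : 𝕜)
      = RCLike.re (inner 𝕜 x (A x) : 𝕜) + RCLike.re (inner 𝕜 y (A y) : 𝕜)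
        + 2 * RCLike.re (inner 𝕜 x (A y) : 𝕜) := by
    intro x y
    have h1 : (inner 𝕜 y (A x) : 𝕜) = starRingEnd 𝕜 (inner 𝕜 x (A y) : 𝕜) := by
      rw [← hA' x y]
      exact (inner_conj_symm y (A x)).symm
    rw [map_add, inner_add_left, inner_add_right, inner_add_right, h1]
    simp only [map_add, RCLike.conj_re]
    ring
  have hre : ∀ x y : H,
      RCLike.re (inner 𝕜 (T x) (A (T y)) : 𝕜) = RCLike.re (inner 𝕜 x (A y) : 𝕜) := by
    intro x y
    have e1 := hexp (T x) (T y)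
    have e2 := hexp x y
    have e4 := hqpres (x + y)
    rw [map_add] at e4
    have e5 := hqpres x
    have e6 := hqpres y
    linarith
  have hAU : ∀ x y : H, (inner 𝕜 (T x) (A (T y)) : 𝕜) = inner 𝕜 x (A y) := by
    intro x y
    have him : RCLike.im (inner 𝕜 (T x) (A (T y)) : 𝕜) = RCLike.im (inner 𝕜 x (A y) : 𝕜) := by
      have h2 := hre x ((RCLike.I : 𝕜) • y)
      have e1 : T ((RCLike.I : 𝕜) • y) = (RCLike.I : 𝕜) • T y := map_smul T _ _
      have e2 : A ((RCLike.I : 𝕜) • T y) = (RCLike.I : 𝕜) • A (T y) := map_smul A _ _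
      have e3 : A ((RCLike.I : 𝕜) • y) = (RCLike.I : 𝕜) • A y := map_smul A _ _
      rw [e1, e2, inner_smul_right, e3, inner_smul_right,
        RCLike.I_mul_re, RCLike.I_mul_re] at h2
      linarith
    exact RCLike.ext (hre x y) him
  -- surjectivity
  have hTsurj : Function.Surjective T := by
    intro y
    rcases eq_or_ne y 0 with rfl | hy0
    · exact ⟨0, map_zero T⟩
    · have hqy := hqpos y hy0
      have hs0 : Real.sqrt (RCLike.re (inner 𝕜 y (A y) : 𝕜)) ≠ 0 :=
        ne_of_gt (Real.sqrt_pos.mpr hqy)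
      obtain ⟨z, hzE, hzeq⟩ := hTbij.surjOn (hscale y hy0)
      refine ⟨(((Real.sqrt (RCLike.re (inner 𝕜 y (A y) : 𝕜))) : ℝ) : 𝕜) • z, ?_⟩
      rw [map_smul, hzeq, smul_smul, ← RCLike.ofReal_mul, mul_inv_cancel₀ hs0,
        RCLike.ofReal_one, one_smul]
  -- inverse
  set Teq := LinearEquiv.ofBijective T ⟨hTinj, hTsurj⟩ with hTeq
  set Tinv : H →ₗ[𝕜] H := Teq.symm.toLinearMap with hTinvdef
  have hTinv1 : ∀ x : H, T (Tinv x) = x := fun x => Teq.apply_symm_apply x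
  have hTinv2 : ∀ x : H, Tinv (T x) = x := fun x => Teq.symm_apply_apply x
  -- positivity of eigenvalues
  have hSpos : ∀ ν ∈ S, 0 < ν := by
    intro ν hν
    obtain ⟨u, huv⟩ := hν.exists_hasEigenvector
    have hu1 : A u = ((ν:ℝ):𝕜) • u := huv.apply_eq_smul
    have hu0 : u ≠ 0 := huv.2
    have h1 : RCLike.re (inner 𝕜 u (A u) : 𝕜) = ν * ‖u‖ ^ 2 := by
      rw [hu1, inner_smul_right, RCLike.re_ofReal_mul, inner_self_eq_norm_sq]
    have h2 := hcoer u
    have hn : (0:ℝ) < ‖u‖ := norm_pos_iff.mpr hu0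
    nlinarith [pow_pos hn 2]
  -- finite dimensionality, split
  have hfdp : ∀ μ ∈ S ∩ Set.Ioi τ, FiniteDimensional 𝕜 (ES A μ) :=
    fun μ hμ => hfd μ ⟨hμ.1, Or.inl hμ.2⟩
  have hfdm : ∀ μ ∈ S ∩ Set.Ioo 0 τ, FiniteDimensional 𝕜 (ES A μ) :=
    fun μ hμ => hfd μ ⟨hμ.1, Or.inr hμ.2⟩
  have hkeyp := key_plus hAsym hdense hτ hmax hfdp T hTinj hAU hcontr
  have hkeym := key_minus hAsym hdense hτ hSpos hmin hfdm T Tinv hTinv1 hTinv2 hAU hcontr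
  have hasmp := assembly hAsym (S ∩ Set.Ioi τ) T hTinj hcontr hkeyp
  have hasmm := assembly hAsym (S ∩ Set.Ioo 0 τ) T hTinj hcontr hkeym
  obtain ⟨him1, hbij1, hiso1⟩ := hasmm
  obtain ⟨him2, hbij2, hiso2⟩ := hasmp
  exact ⟨him1, him2, ⟨hbij1, hiso1⟩, hbij2, hiso2⟩
end
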